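/- arXiv:math/0509598 — 10 statements merged into one kernel-verified Lean document; each statement's English description precedes it below -/
import Mathlib

section
/- Let q be an odd prime power with q ≡ 3 (mod 4), and let i, j ∈ F_q be nonzero. Define f(i,j,k) = ij - (i-j-k)²/4. Then there are at least (q+1)/2 values of k ∈ F_q such that f(i,j,k) is a square in F_q (possibly zero). -/
open scoped Classical

theorem stmt_8 (F : Type*) [Field F] [Fintype F] (q : ℕ)
    (hcard : Fintype.card F = q) (hodd : Odd q) (h4 : q % 4 = 3)
    (i j : F) (hi : i ≠ 0) (hj : j ≠ 0) :
    (q + 1) / 2 ≤ Nat.card {k : F // IsSquare (i * j - (i - j - k) ^ 2 / 4)} := by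
  classical
  -- characteristic is not 2
  have hchar : ringChar F ≠ 2 := by
    intro h
    have := FiniteField.even_card_of_char_two h
    rw [hcard] at this
    obtain ⟨m, hm⟩ := hodd
    omega
  have h2 : (2 : F) ≠ 0 := Ring.two_ne_zero hchar
  have h4F : (4 : F) ≠ 0 := by
    have : (4 : F) = 2 * 2 := by norm_num
    rw [this]; exact mul_ne_zero h2 h2
  set a : F := 4 * i * j with ha_def
  have ha : a ≠ 0 := mul_ne_zero (mul_ne_zero h4F hi) hj
  -- negation of a nonzero nonsquare is a square
  have negsq : ∀ x : F, x ≠ 0 → ¬ IsSquare x → IsSquare (-x) := by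
    intro x hx hnx
    have h1 : quadraticChar F x = -1 := quadraticChar_neg_one_iff_not_isSquare.mpr hnx
    have hm1 : quadraticChar F (-1 : F) = -1 := by
      apply quadraticChar_neg_one_iff_not_isSquare.mpr
      rw [FiniteField.isSquare_neg_one_iff, hcard]
      simp [h4]
    have h3 : quadraticChar F (-x) = 1 := by
      rw [show (-x) = (-1 : F) * x by ring, map_mul, hm1, h1]; ring
    by_contra hns
    rw [quadraticChar_neg_one_iff_not_isSquare.mpr hns] at h3
    norm_num at h3
  -- equivalence with the set of t with 4ij - t^2 a square
  have key : ∀ c : F, IsSquare (i * j - c ^ 2 / 4) ↔ IsSquare (a - c ^ 2) := by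
    intro c
    constructor
    · rintro ⟨r, hr⟩
      exact ⟨2 * r, by rw [ha_def]; field_simp at hr ⊢; linear_combination hr⟩
    · rintro ⟨s, hs⟩
      exact ⟨s / 2, by rw [ha_def] at hs; field_simp; linear_combination 4 * hs⟩
  have e : {k : F // IsSquare (i * j - (i - j - k) ^ 2 / 4)} ≃
      {t : F // IsSquare (a - t ^ 2)} :=
    (Equiv.subLeft (i - j)).subtypeEquiv (fun k => key (i - j - k))
  rw [Nat.card_congr e, Nat.card_eq_fintype_card, Fintype.card_subtype]
  set bad : Finset F := Finset.univ.filter (fun t : F => ¬ IsSquare (a - t ^ 2)) with hbad_def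
  -- for each bad t, pick a nonzero square root of t^2 - a
  have sqrt : ∀ t : F, ∃ s : F, t ∈ bad → (s ≠ 0 ∧ t ^ 2 - a = s * s) := by
    intro t
    by_cases ht : t ∈ bad
    · have hns : ¬ IsSquare (a - t ^ 2) := by
        simpa [hbad_def] using ht
      have hne : a - t ^ 2 ≠ 0 := by
        intro h
        exact hns (h ▸ ⟨0, by ring⟩)
      obtain ⟨s, hs⟩ := negsq _ hne hns
      refine ⟨s, fun _ => ⟨?_, by linear_combination hs⟩⟩
      intro h0
      rw [h0] at hs
      simp at hs
      exact hne (by linear_combination -hs)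
    · exact ⟨0, fun h => absurd h ht⟩
  choose S hS using sqrt
  set g : F × Bool → F := fun p => p.1 + (if p.2 then S p.1 else -(S p.1)) with hg_def
  have hprod : ∀ t : F, t ∈ bad → ∀ b : Bool,
      g (t, b) * (t - (if b then S t else -(S t))) = a := by
    intro t ht b
    have := (hS t ht).2
    simp only [hg_def]
    cases b <;> simp <;> linear_combination this
  have hmaps : ∀ p ∈ bad ×ˢ (Finset.univ : Finset Bool),
      g p ∈ (Finset.univ : Finset F).erase 0 := by
    rintro ⟨t, b⟩ hp
    have ht : t ∈ bad := (Finset.mem_product.mp hp).1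
    refine Finset.mem_erase.mpr ⟨?_, Finset.mem_univ _⟩
    intro h0
    have := hprod t ht b
    rw [h0, zero_mul] at this
    exact ha this.symm
  have hinj : Set.InjOn g ↑(bad ×ˢ (Finset.univ : Finset Bool)) := by
    rintro ⟨t, b⟩ hp ⟨t', b'⟩ hp' heq
    simp only [Finset.coe_product, Set.mem_prod, Finset.mem_coe] at hp hp'
    have ht : t ∈ bad := hp.1
    have ht' : t' ∈ bad := hp'.1
    have hu : g (t, b) ≠ 0 := by
      intro h0
      have := hprod t ht b
      rw [h0, zero_mul] at this
      exact ha this.symm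
    have e1 := hprod t ht b
    have e2 := hprod t' ht' b'
    rw [← heq] at e2
    have e3 : t - (if b then S t else -(S t)) = t' - (if b' then S t' else -(S t')) :=
      mul_left_cancel₀ hu (e1.trans e2.symm)
    have e4 : t + (if b then S t else -(S t)) = t' + (if b' then S t' else -(S t')) := heq
    have htt : t = t' := by
      have : (2 : F) * t = 2 * t' := by linear_combination e3 + e4
      exact mul_left_cancel₀ h2 this
    subst htt
    have hs0 : S t ≠ 0 := (hS t ht).1
    have e5 : (if b then S t else -(S t)) = (if b' then S t else -(S t)) :=
      add_left_cancel e4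
    have hbb : b = b' := by
      cases b <;> cases b'
      · rfl
      · exfalso; norm_num at e5
        refine hs0 ?_
        have h2s : (2 : F) * S t = 0 := by linear_combination -e5
        exact (mul_eq_zero.mp h2s).resolve_left h2
      · exfalso; norm_num at e5
        refine hs0 ?_
        have h2s : (2 : F) * S t = 0 := by linear_combination e5
        exact (mul_eq_zero.mp h2s).resolve_left h2
      · rfl
    rw [hbb]
  have hcount := Finset.card_le_card_of_injOn g hmaps hinj
  simp only [Finset.card_product, Finset.card_erase_of_mem (Finset.mem_univ (0 : F)),
    Finset.card_univ, Fintype.card_bool, hcard] at hcount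
  have hsum : (Finset.univ.filter (fun t : F => IsSquare (a - t ^ 2))).card + bad.card = q := by
    rw [hbad_def, Finset.card_filter_add_card_filter_not, Finset.card_univ, hcard]
  obtain ⟨m, hm⟩ := hodd
  omega
end

section
/- Let q be an odd prime power with q ≡ 3 (mod 4). Then for any n ≥ 4 and any a₁, ..., aₙ ∈ F_q \ {0}, there exist points A₁, ..., Aₙ ∈ F_q² such that Q(Aᵢ, A_{i+1}) = aᵢ for all i = 1, ..., n, where A_{n+1} = A₁. -/
open scoped Classical
def quadrance {F : Type*} [Field F] (A B : F × F) : F :=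
  (B.1 - A.1) ^ 2 + (B.2 - A.2) ^ 2

set_option linter.unusedSectionVars false
set_option linter.unusedVariables false

namespace St9

open Polynomial Finset

variable {F : Type*} [Field F] [Fintype F]
def nrm (z : F × F) : F := z.1 ^ 2 + z.2 ^ 2
def gmul (z w : F × F) : F × F := (z.1 * w.1 - z.2 * w.2, z.1 * w.2 + z.2 * w.1)

lemma two_ne_zero' (hns : ¬ IsSquare (-1 : F)) : (2 : F) ≠ 0 := by
  intro h2
  apply hns
  have h : (-1 : F) = 1 := by linear_combination -h2
  rw [h]; exact ⟨1, by ring⟩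
lemma nrm_gmul (z w : F × F) : nrm (gmul z w) = nrm z * nrm w := by
  simp only [nrm, gmul]; ring
noncomputable def circ (a : F) : Finset (F × F) := univ.filter (fun z => nrm z = a)
lemma mem_circ {a : F} {z : F × F} : z ∈ circ a ↔ nrm z = a := by simp [circ]

lemma circ_card_eq {a : F} (ha : a ≠ 0) {w : F × F} (hw : nrm w = a) :
    (circ a).card = (circ (1 : F)).card := by
  have hw' : w.1 ^ 2 + w.2 ^ 2 = a := hw
  have hinv : ∀ z : F × F, gmul (a⁻¹ * w.1, -(a⁻¹ * w.2)) (gmul w z) = z := by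
    intro z
    apply Prod.ext
    · show a⁻¹ * w.1 * (w.1 * z.1 - w.2 * z.2) - -(a⁻¹ * w.2) * (w.1 * z.2 + w.2 * z.1) = z.1
      field_simp
      linear_combination z.1 * hw'
    · show a⁻¹ * w.1 * (w.1 * z.2 + w.2 * z.1) + -(a⁻¹ * w.2) * (w.1 * z.1 - w.2 * z.2) = z.2
      field_simp
      linear_combination z.2 * hw'
  have hinv2 : ∀ z : F × F, gmul w (gmul (a⁻¹ * w.1, -(a⁻¹ * w.2)) z) = z := by
    intro z
    apply Prod.ext
    · show w.1 * (a⁻¹ * w.1 * z.1 - -(a⁻¹ * w.2) * z.2) - w.2 * (a⁻¹ * w.1 * z.2 + -(a⁻¹ * w.2) * z.1) = z.1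
      field_simp
      linear_combination z.1 * hw'
    · show w.1 * (a⁻¹ * w.1 * z.2 + -(a⁻¹ * w.2) * z.1) + w.2 * (a⁻¹ * w.1 * z.1 - -(a⁻¹ * w.2) * z.2) = z.2
      field_simp
      linear_combination z.2 * hw'
  have hnrmw' : nrm ((a⁻¹ * w.1, -(a⁻¹ * w.2)) : F × F) = a⁻¹ := by
    show (a⁻¹ * w.1) ^ 2 + (-(a⁻¹ * w.2)) ^ 2 = a⁻¹
    field_simp
    linear_combination hw'
  symm
  refine Finset.card_bij' (fun z _ => gmul w z) (fun z _ => gmul (a⁻¹ * w.1, -(a⁻¹ * w.2)) z) ?_ ?_ ?_ ?_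
  · intro z hz
    rw [mem_circ] at hz ⊢
    rw [nrm_gmul, hw, hz, mul_one]
  · intro z hz
    rw [mem_circ] at hz ⊢
    rw [nrm_gmul, hnrmw', hz, inv_mul_cancel₀ ha]
  · intro z _; exact hinv z
  · intro z _; exact hinv2 z

lemma nrm_eq_zero (hns : ¬ IsSquare (-1 : F)) {z : F × F} : nrm z = 0 ↔ z = 0 := by
  constructor
  · intro h
    by_cases hy : z.2 = 0
    · have h2 : z.1 ^ 2 = 0 := by simpa [nrm, hy] using h
      have h1 : z.1 = 0 := pow_eq_zero_iff (n := 2) (by norm_num) |>.mp h2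
      exact Prod.ext h1 hy
    · exfalso
      apply hns
      refine ⟨z.1 * z.2⁻¹, ?_⟩
      have h3 : z.1 ^ 2 = - z.2 ^ 2 := by simp only [nrm] at h; linear_combination h
      field_simp
      linear_combination -h3
  · rintro rfl; simp [nrm]

lemma exists_nrm (hodd' : Fintype.card F % 2 = 1) (x : F) : ∃ z : F × F, nrm z = x := by
  obtain ⟨a, b, h⟩ := FiniteField.exists_root_sum_quadratic
    (f := (X ^ 2 : F[X])) (g := X ^ 2 - C x)
    (by simp [Polynomial.degree_X_pow])
    (by exact_mod_cast Polynomial.degree_X_pow_sub_C (by norm_num : 0 < 2) x) hodd'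
  refine ⟨(a, b), ?_⟩
  simp only [Polynomial.eval_pow, Polynomial.eval_X, Polynomial.eval_sub,
    Polynomial.eval_C] at h
  simp only [nrm]
  linear_combination h

lemma circ_card (hns : ¬ IsSquare (-1 : F)) (hodd' : Fintype.card F % 2 = 1)
    {a : F} (ha : a ≠ 0) : (circ a).card = Fintype.card F + 1 := by
  classical
  set q := Fintype.card F with hq
  have hq2 : 2 ≤ q := Fintype.one_lt_card
  set s : Finset (F × F) := univ.filter (fun z => nrm z ≠ 0) with hs
  set t : Finset F := univ.filter (fun x => x ≠ 0) with ht
  have h1 : s.card = ∑ b ∈ t, (s.filter fun z => nrm z = b).card := by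
    apply Finset.card_eq_sum_card_fiberwise
    intro z hz
    simp only [hs, ht, mem_coe, mem_filter, mem_univ, true_and] at hz ⊢
    exact hz
  have h2 : ∀ b ∈ t, (s.filter fun z => nrm z = b).card = (circ (1 : F)).card := by
    intro b hb
    simp only [ht, mem_filter, mem_univ, true_and] at hb
    have : (s.filter fun z => nrm z = b) = circ b := by
      ext z
      simp only [hs, mem_filter, mem_univ, true_and, mem_circ]
      constructor
      · rintro ⟨-, h⟩; exact h
      · intro h; exact ⟨by rw [h]; exact hb, h⟩
    rw [this]
    obtain ⟨w, hw⟩ := exists_nrm hodd' b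
    exact circ_card_eq hb hw
  have h3 : s.card = t.card * (circ (1 : F)).card := by
    rw [h1, Finset.sum_congr rfl h2, Finset.sum_const, smul_eq_mul]
  have hscard : s.card = q ^ 2 - 1 := by
    have : s = univ.erase (0 : F × F) := by
      ext z
      simp only [hs, mem_filter, mem_univ, true_and, mem_erase, and_true]
      exact not_congr (nrm_eq_zero hns)
    rw [this, Finset.card_erase_of_mem (mem_univ _), card_univ, Fintype.card_prod, ← hq, sq]
  have htcard : t.card = q - 1 := by
    have : t = univ.erase (0 : F) := by
      ext x
      simp [ht]
    rw [this, Finset.card_erase_of_mem (mem_univ _), card_univ]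
  have h4 : (q - 1) * (circ (1 : F)).card = q ^ 2 - 1 := by
    rw [← htcard, ← h3, hscard]
  have h5 : (q - 1) * (q + 1) = q ^ 2 - 1 := by
    obtain ⟨k, hk⟩ : ∃ k, q = k + 2 := ⟨q - 2, by omega⟩
    have e1 : (k + 2) ^ 2 = k ^ 2 + 4 * k + 4 := by ring
    have e2 : (k + 1) * (k + 3) = k ^ 2 + 4 * k + 3 := by ring
    have e3 : q - 1 = k + 1 := by omega
    have e4 : q + 1 = k + 3 := by omega
    rw [e3, e4, hk]
    omega
  have h6 : (circ (1 : F)).card = q + 1 := by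
    have hpos : 0 < q - 1 := by omega
    exact Nat.eq_of_mul_eq_mul_left hpos (by rw [h4, h5])
  obtain ⟨w, hw⟩ := exists_nrm hodd' a
  rw [circ_card_eq ha hw, h6]


lemma quad_three {A B C y1 y2 y3 : F} (hA : A ≠ 0)
    (h1 : A * y1 ^ 2 + B * y1 + C = 0) (h2 : A * y2 ^ 2 + B * y2 + C = 0)
    (h3 : A * y3 ^ 2 + B * y3 + C = 0)
    (h12 : y1 ≠ y2) (h13 : y1 ≠ y3) (h23 : y2 ≠ y3) : False := by
  have k12 : (y1 - y2) * (A * (y1 + y2) + B) = 0 := by linear_combination h1 - h2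
  have k13 : (y1 - y3) * (A * (y1 + y3) + B) = 0 := by linear_combination h1 - h3
  have e12 : A * (y1 + y2) + B = 0 :=
    (mul_eq_zero.mp k12).resolve_left (sub_ne_zero.mpr h12)
  have e13 : A * (y1 + y3) + B = 0 :=
    (mul_eq_zero.mp k13).resolve_left (sub_ne_zero.mpr h13)
  have hz : A * (y2 - y3) = 0 := by linear_combination e12 - e13
  rcases mul_eq_zero.mp hz with h | h
  · exact hA h
  · exact h23 (by linear_combination h)

lemma circle_line_aux {u v e c : F} (hu : u ≠ 0) (hA : u ^ 2 + v ^ 2 ≠ 0)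
    {z1 z2 z3 : F × F}
    (hc1 : nrm z1 = c) (hc2 : nrm z2 = c) (hc3 : nrm z3 = c)
    (hl1 : u * z1.1 + v * z1.2 = e) (hl2 : u * z2.1 + v * z2.2 = e)
    (hl3 : u * z3.1 + v * z3.2 = e)
    (h12 : z1 ≠ z2) (h13 : z1 ≠ z3) (h23 : z2 ≠ z3) : False := by
  have hy : ∀ (w w' : F × F), u * w.1 + v * w.2 = e → u * w'.1 + v * w'.2 = e →
      w.2 = w'.2 → w = w' := by
    intro w w' hw hw' h2
    have hx : u * w.1 = u * w'.1 := by linear_combination hw - hw' - v * h2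
    exact Prod.ext (mul_left_cancel₀ hu hx) h2
  have hcc : ∀ (w : F × F), nrm w = c → u * w.1 + v * w.2 = e →
      (u ^ 2 + v ^ 2) * w.2 ^ 2 + (-2 * e * v) * w.2 + (e ^ 2 - c * u ^ 2) = 0 := by
    intro w hc hl
    have hc' : w.1 ^ 2 + w.2 ^ 2 = c := hc
    linear_combination u ^ 2 * hc' - (e - v * w.2 + u * w.1) * hl
  exact quad_three hA (hcc z1 hc1 hl1) (hcc z2 hc2 hl2) (hcc z3 hc3 hl3)
    (fun h => h12 (hy _ _ hl1 hl2 h)) (fun h => h13 (hy _ _ hl1 hl3 h))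
    (fun h => h23 (hy _ _ hl2 hl3 h))

lemma circle_line {u v e c : F} (hA : u ^ 2 + v ^ 2 ≠ 0)
    {z1 z2 z3 : F × F}
    (hc1 : nrm z1 = c) (hc2 : nrm z2 = c) (hc3 : nrm z3 = c)
    (hl1 : u * z1.1 + v * z1.2 = e) (hl2 : u * z2.1 + v * z2.2 = e)
    (hl3 : u * z3.1 + v * z3.2 = e)
    (h12 : z1 ≠ z2) (h13 : z1 ≠ z3) (h23 : z2 ≠ z3) : False := by
  by_cases hu : u = 0
  · have hv : v ≠ 0 := by
      intro hv
      apply hA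
      rw [hu, hv]; ring
    have hsw : ∀ w w' : F × F, (w.2, w.1) = (w'.2, w'.1) → w = w' := by
      intro w w' h
      exact Prod.ext (congrArg Prod.snd h) (congrArg Prod.fst h)
    refine circle_line_aux (u := v) (v := u) (e := e) (c := c) hv (by rw [add_comm] at hA; exact hA)
      (z1 := (z1.2, z1.1)) (z2 := (z2.2, z2.1)) (z3 := (z3.2, z3.1))
      ?_ ?_ ?_ ?_ ?_ ?_ ?_ ?_ ?_
    · show z1.2 ^ 2 + z1.1 ^ 2 = c; rw [add_comm]; exact hc1
    · show z2.2 ^ 2 + z2.1 ^ 2 = c; rw [add_comm]; exact hc2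
    · show z3.2 ^ 2 + z3.1 ^ 2 = c; rw [add_comm]; exact hc3
    · show v * z1.2 + u * z1.1 = e; linear_combination hl1
    · show v * z2.2 + u * z2.1 = e; linear_combination hl2
    · show v * z3.2 + u * z3.1 = e; linear_combination hl3
    · intro h; exact h12 (hsw _ _ h)
    · intro h; exact h13 (hsw _ _ h)
    · intro h; exact h23 (hsw _ _ h)
  · exact circle_line_aux hu hA hc1 hc2 hc3 hl1 hl2 hl3 h12 h13 h23

lemma fiber_le_two (hns : ¬ IsSquare (-1 : F)) {a b : F} {s0 : F × F} (hs : s0 ≠ 0) :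
    ((circ a ×ˢ circ b).filter (fun p => p.1 + p.2 = s0)).card ≤ 2 := by
  by_contra hlt
  push_neg at hlt
  obtain ⟨p1, p2, p3, m1, m2, m3, h12, h13, h23⟩ := Finset.two_lt_card_iff.mp hlt
  have h2 : (2 : F) ≠ 0 := two_ne_zero' hns
  have hns0 : nrm s0 ≠ 0 := fun h => hs ((nrm_eq_zero hns).mp h)
  have unpack : ∀ p : (F × F) × (F × F),
      p ∈ (circ a ×ˢ circ b).filter (fun p => p.1 + p.2 = s0) →
      nrm p.1 = a ∧ nrm p.2 = b ∧ p.2 = s0 - p.1 := by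
    intro p hp
    simp only [mem_filter, mem_product, mem_circ] at hp
    exact ⟨hp.1.1, hp.1.2, by rw [← hp.2]; ring⟩
  obtain ⟨hc1, hb1, he1⟩ := unpack p1 m1
  obtain ⟨hc2, hb2, he2⟩ := unpack p2 m2
  obtain ⟨hc3, hb3, he3⟩ := unpack p3 m3
  have hline : ∀ p : (F × F) × (F × F), nrm p.1 = a → nrm p.2 = b → p.2 = s0 - p.1 →
      (2 * s0.1) * p.1.1 + (2 * s0.2) * p.1.2 = nrm s0 + a - b := by
    intro p hpa hpb hpe
    have h1' : p.1.1 ^ 2 + p.1.2 ^ 2 = a := hpa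
    have h2' : p.2.1 ^ 2 + p.2.2 ^ 2 = b := hpb
    have e1 : p.2.1 = s0.1 - p.1.1 := by rw [hpe]; rfl
    have e2 : p.2.2 = s0.2 - p.1.2 := by rw [hpe]; rfl
    rw [e1, e2] at h2'
    show (2 * s0.1) * p.1.1 + (2 * s0.2) * p.1.2 = (s0.1 ^ 2 + s0.2 ^ 2) + a - b
    linear_combination h1' - h2'
  have hAne : (2 * s0.1) ^ 2 + (2 * s0.2) ^ 2 ≠ 0 := by
    intro h
    apply hns0
    show s0.1 ^ 2 + s0.2 ^ 2 = 0
    have h4 : (4 : F) ≠ 0 := by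
      intro h4; apply h2
      have hmul : (2 : F) * 2 = 0 := by linear_combination h4
      rcases mul_eq_zero.mp hmul with h | h <;> exact h
    apply mul_left_cancel₀ h4
    rw [mul_zero]
    linear_combination h
  have hfst : ∀ w w' : (F × F) × (F × F), w.2 = s0 - w.1 → w'.2 = s0 - w'.1 →
      w.1 = w'.1 → w = w' := by
    intro w w' hw hw' h1
    exact Prod.ext h1 (by rw [hw, hw', h1])
  exact circle_line hAne hc1 hc2 hc3
    (hline p1 hc1 hb1 he1) (hline p2 hc2 hb2 he2) (hline p3 hc3 hb3 he3)
    (fun h => h12 (hfst _ _ he1 he2 h)) (fun h => h13 (hfst _ _ he1 he3 h))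
    (fun h => h23 (hfst _ _ he2 he3 h))


lemma tab_card (hns : ¬ IsSquare (-1 : F)) (hodd' : Fintype.card F % 2 = 1)
    {a b : F} (ha : a ≠ 0) (hb : b ≠ 0) :
    Fintype.card F ^ 2 + Fintype.card F ≤
      2 * (((circ a ×ˢ circ b).image (fun p => p.1 + p.2)).card) := by
  classical
  set q := Fintype.card F with hq
  set P := circ a ×ˢ circ b with hP
  set T := P.image (fun p => p.1 + p.2) with hT
  have hcard : P.card = (q + 1) * (q + 1) := by
    rw [hP, Finset.card_product, circ_card hns hodd' ha, circ_card hns hodd' hb]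
  have h1 : P.card = ∑ w ∈ T, (P.filter fun p => p.1 + p.2 = w).card :=
    Finset.card_eq_sum_card_fiberwise (fun p hp => Finset.mem_image_of_mem _ hp)
  have h2 : ∀ w ∈ T, (P.filter fun p => p.1 + p.2 = w).card ≤
      2 + (if w = 0 then q + 1 else 0) := by
    intro w hw
    by_cases h0 : w = 0
    · subst h0
      rw [if_pos rfl]
      have hle : (P.filter fun p => p.1 + p.2 = 0).card ≤ (circ a).card := by
        apply Finset.card_le_card_of_injOn Prod.fst
        · intro p hp
          simp only [hP, mem_coe, mem_filter, mem_product] at hp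
          exact hp.1.1
        · intro p hp p' hp' h
          simp only [coe_filter, Set.mem_setOf_eq] at hp hp'
          have e : p.2 = p'.2 := by
            have e1 : p.2 = 0 - p.1 := by rw [← hp.2]; ring
            have e2 : p'.2 = 0 - p'.1 := by rw [← hp'.2]; ring
            rw [e1, e2, h]
          exact Prod.ext h e
      rw [circ_card hns hodd' ha] at hle
      rw [hP] at hle ⊢
      omega
    · rw [if_neg h0]
      have hf2 := fiber_le_two hns (a := a) (b := b) (s0 := w) h0
      rw [hP]
      omega
  have h3 : P.card ≤ ∑ w ∈ T, (2 + if w = 0 then q + 1 else 0) :=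
    h1 ▸ Finset.sum_le_sum h2
  have h4 : ∑ w ∈ T, (2 + if w = 0 then q + 1 else 0) =
      2 * T.card + ∑ w ∈ T, (if w = 0 then q + 1 else 0) := by
    rw [Finset.sum_add_distrib, Finset.sum_const, smul_eq_mul]
    omega
  have h5 : ∑ w ∈ T, (if w = 0 then q + 1 else 0) ≤ q + 1 := by
    rw [Finset.sum_ite_eq' T (0 : F × F) (fun _ => q + 1)]
    split <;> omega
  have e : (q + 1) * (q + 1) = q ^ 2 + 2 * q + 1 := by ring
  omega

lemma four_sum (hns : ¬ IsSquare (-1 : F)) (hodd' : Fintype.card F % 2 = 1)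
    {a1 a2 a3 a4 : F} (h1 : a1 ≠ 0) (h2 : a2 ≠ 0) (h3 : a3 ≠ 0) (h4 : a4 ≠ 0)
    (s : F × F) :
    ∃ d1 d2 d3 d4 : F × F, nrm d1 = a1 ∧ nrm d2 = a2 ∧ nrm d3 = a3 ∧ nrm d4 = a4 ∧
      d1 + d2 + d3 + d4 = s := by
  classical
  set q := Fintype.card F with hq
  set T1 := (circ a1 ×ˢ circ a2).image (fun p => p.1 + p.2) with hT1d
  set T2 := (circ a3 ×ˢ circ a4).image (fun p => p.1 + p.2) with hT2d
  set T2' := T2.image (fun w => s - w) with hT2'd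
  have hT1 : q ^ 2 + q ≤ 2 * T1.card := tab_card hns hodd' h1 h2
  have hT2 : q ^ 2 + q ≤ 2 * T2.card := tab_card hns hodd' h3 h4
  have hT2' : T2'.card = T2.card :=
    Finset.card_image_of_injective _ sub_right_injective
  have huniv : (T1 ∪ T2').card ≤ q ^ 2 := by
    calc (T1 ∪ T2').card ≤ Fintype.card (F × F) := Finset.card_le_univ _
    _ = q ^ 2 := by rw [Fintype.card_prod, ← hq, sq]
  have hq1 : 1 ≤ q := Fintype.card_pos
  have hinter : 0 < (T1 ∩ T2').card := by
    have hui := Finset.card_union_add_card_inter T1 T2'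
    omega
  obtain ⟨w, hw⟩ := Finset.card_pos.mp hinter
  rw [Finset.mem_inter] at hw
  obtain ⟨p, hp, hps⟩ := Finset.mem_image.mp hw.1
  obtain ⟨w2, hw2, hw2s⟩ := Finset.mem_image.mp hw.2
  obtain ⟨p2, hp2, hp2s⟩ := Finset.mem_image.mp hw2
  rw [Finset.mem_product] at hp hp2
  refine ⟨p.1, p.2, p2.1, p2.2, mem_circ.mp hp.1, mem_circ.mp hp.2,
    mem_circ.mp hp2.1, mem_circ.mp hp2.2, ?_⟩
  linear_combination hps + hp2s - hw2s

end St9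


theorem stmt_9 (F : Type*) [Field F] [Fintype F] (q : ℕ)
    (hcard : Fintype.card F = q) (hodd : Odd q) (h4 : q % 4 = 3)
    (n : ℕ) (hn : 4 ≤ n) (a : ZMod n → F) (ha : ∀ i, a i ≠ 0) :
    ∃ A : ZMod n → F × F, ∀ i : ZMod n, quadrance (A i) (A (i + 1)) = a i := by
  classical
  haveI : NeZero n := ⟨by omega⟩
  have hns : ¬ IsSquare (-1 : F) := by
    rw [FiniteField.isSquare_neg_one_iff, hcard, h4]
    simp
  have hodd' : Fintype.card F % 2 = 1 := by rw [hcard]; omega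
  set c : ℕ → ZMod n := fun k => (k : ZMod n) with hc
  have hne : ∀ j k : ℕ, j < n → k < n → j ≠ k → c j ≠ c k := by
    intro j k hj hk hjk h
    apply hjk
    have := congrArg ZMod.val h
    rwa [hc, ZMod.val_cast_of_lt hj, ZMod.val_cast_of_lt hk] at this
  have h01 : c 0 ≠ c 1 := hne 0 1 (by omega) (by omega) (by omega)
  have h02 : c 0 ≠ c 2 := hne 0 2 (by omega) (by omega) (by omega)
  have h03 : c 0 ≠ c 3 := hne 0 3 (by omega) (by omega) (by omega)
  have h12 : c 1 ≠ c 2 := hne 1 2 (by omega) (by omega) (by omega)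
  have h13 : c 1 ≠ c 3 := hne 1 3 (by omega) (by omega) (by omega)
  have h23 : c 2 ≠ c 3 := hne 2 3 (by omega) (by omega) (by omega)
  set S4 : Finset (ZMod n) := insert (c 0) (insert (c 1) (insert (c 2) {c 3})) with hS4
  have he : ∀ i : ZMod n, ∃ z : F × F, St9.nrm z = a i :=
    fun i => St9.exists_nrm hodd' (a i)
  choose e he' using he
  set s0 : F × F := ∑ i ∈ Finset.univ \ S4, e i with hs0
  obtain ⟨d1, d2, d3, d4, hd1, hd2, hd3, hd4, hsum4⟩ :=
    St9.four_sum hns hodd' (ha (c 0)) (ha (c 1)) (ha (c 2)) (ha (c 3)) (-s0)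
  set d : ZMod n → F × F := fun i =>
    if i = c 0 then d1 else if i = c 1 then d2 else if i = c 2 then d3
    else if i = c 3 then d4 else e i with hd
  have hnd : ∀ i, St9.nrm (d i) = a i := by
    intro i
    rw [hd]
    dsimp only
    split_ifs with k0 k1 k2 k3
    · rw [k0]; exact hd1
    · rw [k1]; exact hd2
    · rw [k2]; exact hd3
    · rw [k3]; exact hd4
    · exact he' i
  have hdS4 : ∀ i : ZMod n, i ∉ S4 → d i = e i := by
    intro i hi
    rw [hS4] at hi
    simp only [Finset.mem_insert, Finset.mem_singleton, not_or] at hi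
    rw [hd]
    dsimp only
    rw [if_neg hi.1, if_neg hi.2.1, if_neg hi.2.2.1, if_neg hi.2.2.2]
  have hsum : ∑ i : ZMod n, d i = 0 := by
    rw [← Finset.sum_sdiff (Finset.subset_univ S4)]
    have hS4sum : ∑ i ∈ S4, d i = d1 + d2 + d3 + d4 := by
      rw [hS4]
      rw [Finset.sum_insert (by simp [h01, h02, h03]),
        Finset.sum_insert (by simp [h12, h13]),
        Finset.sum_insert (by simp [h23]), Finset.sum_singleton]
      have e0 : d (c 0) = d1 := by rw [hd]; dsimp only; rw [if_pos rfl]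
      have e1 : d (c 1) = d2 := by
        rw [hd]; dsimp only; rw [if_neg h01.symm, if_pos rfl]
      have e2 : d (c 2) = d3 := by
        rw [hd]; dsimp only; rw [if_neg h02.symm, if_neg h12.symm, if_pos rfl]
      have e3 : d (c 3) = d4 := by
        rw [hd]; dsimp only
        rw [if_neg h03.symm, if_neg h13.symm, if_neg h23.symm, if_pos rfl]
      rw [e0, e1, e2, e3]
      ring
    have hrest : ∑ i ∈ Finset.univ \ S4, d i = s0 := by
      rw [hs0]
      apply Finset.sum_congr rfl
      intro i hi
      exact hdS4 i (Finset.mem_sdiff.mp hi).2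
    rw [hS4sum, hrest, hsum4]
    ring
  set A : ZMod n → F × F := fun i => ∑ j ∈ Finset.range i.val, d ((j : ℕ) : ZMod n)
    with hA
  refine ⟨A, ?_⟩
  intro i
  have key : A (i + 1) - A i = d i := by
    have hm : i.val < n := ZMod.val_lt i
    by_cases hm1 : i.val + 1 < n
    · have hival : (i + 1).val = i.val + 1 := by
        have h1 : i + 1 = ((i.val + 1 : ℕ) : ZMod n) := by
          push_cast
          rw [ZMod.natCast_zmod_val]
        rw [h1, ZMod.val_cast_of_lt hm1]
      rw [hA]
      dsimp only
      rw [hival, Finset.sum_range_succ, ZMod.natCast_zmod_val]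
      ring
    · have hend : i.val + 1 = n := by omega
      have hi10 : i + 1 = 0 := by
        have h1 : i + 1 = ((i.val + 1 : ℕ) : ZMod n) := by
          push_cast
          rw [ZMod.natCast_zmod_val]
        rw [h1, hend, ZMod.natCast_self]
      have hA0 : A (i + 1) = 0 := by
        rw [hi10, hA]
        dsimp only
        rw [ZMod.val_zero, Finset.sum_range_zero]
      have htot : A i + d i = 0 := by
        have hstep : A i + d i = ∑ j ∈ Finset.range n, d ((j : ℕ) : ZMod n) := by
          rw [hA]
          dsimp only
          rw [show Finset.range n = Finset.range (i.val + 1) from by rw [hend],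
            Finset.sum_range_succ, ZMod.natCast_zmod_val]
        have hbij : ∑ j ∈ Finset.range n, d ((j : ℕ) : ZMod n) = ∑ i : ZMod n, d i := by
          apply Finset.sum_nbij' (fun j => ((j : ℕ) : ZMod n)) (fun z => z.val)
          · intro x _; exact Finset.mem_univ _
          · intro x _; exact Finset.mem_range.mpr (ZMod.val_lt x)
          · intro x hx; exact ZMod.val_cast_of_lt (Finset.mem_range.mp hx)
          · intro x _; exact ZMod.natCast_zmod_val x
          · intro x _; rfl
        rw [hstep, hbij, hsum]
      rw [hA0]
      linear_combination -htot
  have hquad : quadrance (A i) (A (i + 1)) = St9.nrm (A (i + 1) - A i) := by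
    simp [quadrance, St9.nrm]
  rw [hquad, key, hnd i]
end

section
/- Let q be an odd prime power with q ≡ 3 (mod 4). For any nonzero a₁, a₂, a₃, a₄ ∈ F_q, there exist points A₁, A₂, A₃, A₄ ∈ F_q² with Q(A₁,A₂) = a₁, Q(A₂,A₃) = a₂, Q(A₃,A₄) = a₃, and Q(A₄,A₁) = a₄. -/
open scoped Classical

open Finset

section Aux

variable {F : Type*} [Field F] [Fintype F]

lemma my_nonsquare_eq (hneg : ¬ IsSquare (-1 : F)) {u : F} (hu : ¬ IsSquare u) :
    ∃ z : F, z ≠ 0 ∧ u = -(z ^ 2) := by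
  classical
  have hu0 : u ≠ 0 := by rintro rfl; exact hu (by simp)
  have h1 : quadraticChar F u = -1 := quadraticChar_neg_one_iff_not_isSquare.2 hu
  have h2 : quadraticChar F (-1 : F) = -1 := quadraticChar_neg_one_iff_not_isSquare.2 hneg
  have h3 : quadraticChar F (-u) = 1 := by
    rw [show (-u : F) = (-1) * u by ring, map_mul, h1, h2]; ring
  have h4 : IsSquare (-u) := (quadraticChar_one_iff_isSquare (by simpa using hu0)).1 h3
  obtain ⟨z, hz⟩ := h4
  refine ⟨z, ?_, by linear_combination -hz⟩
  rintro rfl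
  rw [mul_zero] at hz
  exact hu0 (by linear_combination -hz)

lemma my_aniso (hneg : ¬ IsSquare (-1 : F)) {x y : F} (h : x ^ 2 + y ^ 2 = 0) :
    x = 0 ∧ y = 0 := by
  rcases eq_or_ne y 0 with rfl | hy
  · refine ⟨?_, rfl⟩
    have : x ^ 2 = 0 := by linear_combination h
    exact pow_eq_zero_iff (n := 2) (by norm_num) |>.1 this
  · exfalso
    apply hneg
    refine ⟨x / y, ?_⟩
    field_simp
    linear_combination -h

lemma my_count (htwo : (2 : F) ≠ 0) (hneg : ¬ IsSquare (-1 : F)) (m s : F) (hm : m ≠ 0) :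
    2 * (univ.filter fun c : F => ¬ IsSquare (m - (c - s) ^ 2)).card
      ≤ Fintype.card F - 1 := by
  classical
  set T := univ.filter fun c : F => ¬ IsSquare (m - (c - s) ^ 2) with hT
  have hz : ∀ c ∈ T, ∃ z : F, z ≠ 0 ∧ (c - s) ^ 2 - z ^ 2 = m := by
    intro c hc
    rw [hT, mem_filter] at hc
    obtain ⟨z, hz0, hzu⟩ := my_nonsquare_eq hneg hc.2
    exact ⟨z, hz0, by linear_combination -hzu⟩
  choose! z hz0 hzm using hz
  set P := univ.filter fun p : F × F => p.1 * p.2 = m with hP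
  have hPcard : P.card = Fintype.card F - 1 := by
    have himg : P = (univ.filter fun u : F => u ≠ 0).image fun u => (u, m * u⁻¹) := by
      ext ⟨x, y⟩
      simp only [hP, mem_filter, mem_univ, true_and, mem_image, Prod.mk.injEq]
      constructor
      · intro hxy
        have hx : x ≠ 0 := by
          rintro rfl; rw [zero_mul] at hxy; exact hm hxy.symm
        refine ⟨x, hx, rfl, ?_⟩
        field_simp
        linear_combination -hxy
      · rintro ⟨u, hu, rfl, rfl⟩
        field_simp
    rw [himg, card_image_of_injOn (fun u _ v _ h => (Prod.mk.injEq _ _ _ _ ▸ h).1)]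
    rw [filter_ne', card_erase_of_mem (mem_univ 0), card_univ]
  have hcard2 : ({1, -1} : Finset F).card = 2 :=
    card_pair (by intro h; exact htwo (by linear_combination h))
  have hinj : (T ×ˢ ({1, -1} : Finset F)).card ≤ P.card := by
    apply Finset.card_le_card_of_injOn
      (fun p => ((p.1 - s) + p.2 * z p.1, (p.1 - s) - p.2 * z p.1))
    · rintro ⟨c, ε⟩ hp
      rw [Finset.mem_coe, mem_product] at hp
      rw [hP, Finset.mem_coe, mem_filter]
      refine ⟨mem_univ _, ?_⟩
      have hε : ε = 1 ∨ ε = -1 := by simpa using hp.2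
      have h := hzm c hp.1
      rcases hε with rfl | rfl <;> · simp only; linear_combination h
    · rintro ⟨c, ε⟩ hp ⟨c', ε'⟩ hp' heq
      rw [Finset.mem_coe, mem_product] at hp hp'
      simp only [Prod.mk.injEq] at heq ⊢
      have h1 := heq.1
      have h2 := heq.2
      have hc : c = c' := by
        have h3 : 2 * c = 2 * c' := by linear_combination h1 + h2
        exact mul_left_cancel₀ htwo h3
      subst hc
      refine ⟨rfl, ?_⟩
      have h4 : 2 * (ε * z c) = 2 * (ε' * z c) := by linear_combination h1 - h2
      exact mul_right_cancel₀ (hz0 c hp.1) (mul_left_cancel₀ htwo h4)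
  calc 2 * T.card = (T ×ˢ ({1, -1} : Finset F)).card := by
        rw [card_product, hcard2]; ring
    _ ≤ P.card := hinj
    _ = Fintype.card F - 1 := hPcard

lemma my_sq_add_sq (hq : Fintype.card F % 2 = 1) (a : F) :
    ∃ x y : F, x ^ 2 + y ^ 2 = a := by
  obtain ⟨x, y, h⟩ := FiniteField.exists_root_sum_quadratic
    (f := Polynomial.X ^ 2) (g := Polynomial.X ^ 2 - Polynomial.C a)
    (Polynomial.degree_X_pow 2) (Polynomial.degree_X_pow_sub_C (by norm_num) a) hq
  simp only [Polynomial.eval_pow, Polynomial.eval_X, Polynomial.eval_sub,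
    Polynomial.eval_C] at h
  exact ⟨x, y, by linear_combination h⟩

lemma my_step (hneg : ¬ IsSquare (-1 : F)) (htwo : (2 : F) ≠ 0)
    (hq : Fintype.card F % 2 = 1)
    (a b c y : F) (hy : y ^ 2 = 4 * a * b - (c - a - b) ^ 2)
    (w : F × F) (hw : w.1 ^ 2 + w.2 ^ 2 = c) :
    ∃ z₁ z₂ : F × F, z₁.1 ^ 2 + z₁.2 ^ 2 = a ∧ z₂.1 ^ 2 + z₂.2 ^ 2 = b ∧
      z₁ + z₂ = w := by
  rcases eq_or_ne c 0 with rfl | hc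
  · have hab : a = b := by
      by_contra hab
      apply hneg
      have hd : a - b ≠ 0 := sub_ne_zero.mpr hab
      refine ⟨y / (a - b), ?_⟩
      field_simp
      linear_combination -hy
    obtain ⟨hw1, hw2⟩ := my_aniso hneg hw
    obtain ⟨x₀, y₀, hxy⟩ := my_sq_add_sq hq a
    refine ⟨(x₀, y₀), (-x₀, -y₀), hxy, by simpa using hab ▸ hxy, ?_⟩
    have : w = 0 := Prod.ext hw1 hw2
    rw [this]
    simp [Prod.ext_iff]
  · set t := (c + a - b) / 2 with ht
    set u := y / 2 with hu
    have htu : t ^ 2 + u ^ 2 = c * a := by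
      rw [ht, hu]
      field_simp
      linear_combination hy
    have ht2 : 2 * t = c + a - b := by
      rw [ht]; field_simp
    have hdiv : ∀ p x : F, p - x / c = (c * p - x) / c := by
      intro p x; field_simp
    refine ⟨((t * w.1 + u * w.2) / c, (t * w.2 - u * w.1) / c),
      (w.1 - (t * w.1 + u * w.2) / c, w.2 - (t * w.2 - u * w.1) / c), ?_, ?_, ?_⟩
    · show ((t * w.1 + u * w.2) / c) ^ 2 + ((t * w.2 - u * w.1) / c) ^ 2 = a
      rw [div_pow, div_pow, ← add_div, div_eq_iff (pow_ne_zero 2 hc)]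
      linear_combination (w.1 ^ 2 + w.2 ^ 2) * htu + c * a * hw
    · show (w.1 - (t * w.1 + u * w.2) / c) ^ 2 + (w.2 - (t * w.2 - u * w.1) / c) ^ 2 = b
      rw [hdiv, hdiv, div_pow, div_pow, ← add_div, div_eq_iff (pow_ne_zero 2 hc)]
      linear_combination (w.1 ^ 2 + w.2 ^ 2) * htu
        + (c ^ 2 - 2 * c * t + c * a) * hw - c ^ 2 * ht2
    · simp [Prod.ext_iff]

end Aux

theorem stmt_10 (F : Type*) [Field F] [Fintype F] (q : ℕ)
    (hcard : Fintype.card F = q) (hodd : Odd q) (h4 : q % 4 = 3)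
    (a₁ a₂ a₃ a₄ : F) (h₁ : a₁ ≠ 0) (h₂ : a₂ ≠ 0) (h₃ : a₃ ≠ 0) (h₄ : a₄ ≠ 0) :
    ∃ A₁ A₂ A₃ A₄ : F × F,
      quadrance A₁ A₂ = a₁ ∧ quadrance A₂ A₃ = a₂ ∧
      quadrance A₃ A₄ = a₃ ∧ quadrance A₄ A₁ = a₄ := by
  classical
  have hcard4 : Fintype.card F % 4 = 3 := by rw [hcard]; exact h4
  have hneg : ¬ IsSquare (-1 : F) := by
    rw [FiniteField.isSquare_neg_one_iff]; simp [hcard4]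
  have htwo : (2 : F) ≠ 0 := by
    intro h
    apply hneg
    have : (-1 : F) = 1 := by linear_combination -h
    rw [this]; exact IsSquare.one
  have hq : Fintype.card F % 2 = 1 := by
    rw [hcard]; exact Nat.odd_iff.1 hodd
  have h4' : (4 : F) ≠ 0 := by
    intro h; exact htwo (by
      have := mul_self_eq_zero.mp (show (2 : F) * 2 = 0 by linear_combination h)
      exact this)
  have hm1 : (4 * a₁ * a₂ : F) ≠ 0 := by
    apply mul_ne_zero (mul_ne_zero h4' h₁) h₂
  have hm2 : (4 * a₃ * a₄ : F) ≠ 0 := by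
    apply mul_ne_zero (mul_ne_zero h4' h₃) h₄
  have key : ∃ c : F, IsSquare (4 * a₁ * a₂ - (c - (a₁ + a₂)) ^ 2) ∧
      IsSquare (4 * a₃ * a₄ - (c - (a₃ + a₄)) ^ 2) := by
    by_contra hcon
    push_neg at hcon
    have h1 := my_count htwo hneg (4 * a₁ * a₂) (a₁ + a₂) hm1
    have h2 := my_count htwo hneg (4 * a₃ * a₄) (a₃ + a₄) hm2
    set T₁ := univ.filter fun c : F => ¬ IsSquare (4 * a₁ * a₂ - (c - (a₁ + a₂)) ^ 2) with hT₁
    set T₂ := univ.filter fun c : F => ¬ IsSquare (4 * a₃ * a₄ - (c - (a₃ + a₄)) ^ 2) with hT₂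
    have hcover : (univ : Finset F) ⊆ T₁ ∪ T₂ := by
      intro c _
      rw [mem_union, hT₁, hT₂, mem_filter, mem_filter]
      by_cases h : IsSquare (4 * a₁ * a₂ - (c - (a₁ + a₂)) ^ 2)
      · exact Or.inr ⟨mem_univ _, hcon c h⟩
      · exact Or.inl ⟨mem_univ _, h⟩
    have hle : Fintype.card F ≤ T₁.card + T₂.card := by
      calc Fintype.card F = (univ : Finset F).card := card_univ.symm
        _ ≤ (T₁ ∪ T₂).card := card_le_card hcover
        _ ≤ T₁.card + T₂.card := card_union_le _ _
    have hq1 : 1 ≤ Fintype.card F := Fintype.card_pos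
    omega
  obtain ⟨c, hs1, hs2⟩ := key
  obtain ⟨y₁, hy₁⟩ := hs1
  obtain ⟨y₂, hy₂⟩ := hs2
  obtain ⟨wx, wy, hw⟩ := my_sq_add_sq hq c
  obtain ⟨v₁, v₂, hv₁, hv₂, hsum⟩ := my_step hneg htwo hq a₁ a₂ c y₁
    (by linear_combination -hy₁) (wx, wy) hw
  obtain ⟨v₃, v₄, hv₃, hv₄, hsum'⟩ := my_step hneg htwo hq a₃ a₄ c y₂
    (by linear_combination -hy₂) (-wx, -wy) (by simp only; linear_combination hw)
  have e1 : v₁.1 + v₂.1 = wx := congrArg Prod.fst hsum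
  have e2 : v₁.2 + v₂.2 = wy := congrArg Prod.snd hsum
  have e3 : v₃.1 + v₄.1 = -wx := congrArg Prod.fst hsum'
  have e4 : v₃.2 + v₄.2 = -wy := congrArg Prod.snd hsum'
  refine ⟨(0, 0), v₁, (wx, wy), (wx + v₃.1, wy + v₃.2), ?_, ?_, ?_, ?_⟩
  · simp only [quadrance]
    linear_combination hv₁
  · simp only [quadrance]
    linear_combination hv₂ - (wx - v₁.1 + v₂.1) * e1 - (wy - v₁.2 + v₂.2) * e2
  · simp only [quadrance]
    linear_combination hv₃
  · simp only [quadrance]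
    linear_combination hv₄ + (wx + v₃.1 - v₄.1) * e3 + (wy + v₃.2 - v₄.2) * e4
end

section
/- Let q be an odd prime power with q ≡ 1 (mod 4). Let i, j ∈ F_q be nonzero, and let X, Y ∈ F_q² be distinct points with Q(X,Y) = 0. Then the circles {Z : Q(X,Z) = i} and {Z : Q(Y,Z) = j} intersect if and only if i ≠ j, and when i ≠ j they intersect in exactly one point. -/
open scoped Classical

theorem stmt_11 (F : Type*) [Field F] [Fintype F] (q : ℕ)
    (hcard : Fintype.card F = q) (hodd : Odd q) (h4 : q % 4 = 1)
    (i j : F) (hi : i ≠ 0) (hj : j ≠ 0)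
    (X Y : F × F) (hXY : X ≠ Y) (h0 : quadrance X Y = 0) :
    ((∃ Z : F × F, quadrance X Z = i ∧ quadrance Y Z = j) ↔ i ≠ j) ∧
    (i ≠ j → Nat.card {Z : F × F // quadrance X Z = i ∧ quadrance Y Z = j} = 1) := by
  -- characteristic is odd
  have h2F : (2 : F) ≠ 0 := by
    intro h
    have hdvd : ringChar F ∣ 2 := ringChar.dvd (by exact_mod_cast h)
    have hp : (ringChar F).Prime := CharP.char_is_prime F (ringChar F)
    have hchar : ringChar F = 2 := (Nat.prime_dvd_prime_iff_eq hp Nat.prime_two).mp hdvd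
    have heven := FiniteField.even_card_of_char_two hchar
    rw [hcard] at heven
    rw [Nat.odd_iff] at hodd
    omega
  set a := Y.1 - X.1 with haDef
  set b := Y.2 - X.2 with hbDef
  have hab : a ^ 2 + b ^ 2 = 0 := h0
  have ha : a ≠ 0 := by
    intro h
    have hb2 : b ^ 2 = 0 := by rw [h] at hab; simpa using hab
    have hb0 : b = 0 := by
      have := pow_eq_zero_iff (n := 2) (by norm_num) |>.mp hb2
      exact this
    exact hXY (Prod.ext (sub_eq_zero.mp h).symm (sub_eq_zero.mp hb0).symm)
  have hb : b ≠ 0 := by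
    intro h
    have ha2 : a ^ 2 = 0 := by rw [h] at hab; simpa using hab
    have ha0 : a = 0 := pow_eq_zero_iff (n := 2) (by norm_num) |>.mp ha2
    exact hXY (Prod.ext (sub_eq_zero.mp ha0).symm (sub_eq_zero.mp h).symm)
  have hb2 : b ^ 2 = -a ^ 2 := by linear_combination hab
  have h4b : (2 * b) ^ 2 ≠ 0 := pow_ne_zero _ (mul_ne_zero h2F hb)
  -- reformulate quadrance conditions
  have hquadY : ∀ Z : F × F, quadrance Y Z =
      ((Z.1 - X.1) - a) ^ 2 + ((Z.2 - X.2) - b) ^ 2 := by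
    intro Z; unfold quadrance; rw [haDef, hbDef]; ring
  have hquadX : ∀ Z : F × F, quadrance X Z =
      (Z.1 - X.1) ^ 2 + (Z.2 - X.2) ^ 2 := by
    intro Z; rfl
  -- Existence for i ≠ j
  have hexists : i ≠ j → ∃ Z : F × F, quadrance X Z = i ∧ quadrance Y Z = j := by
    intro hij
    have hk : i - j ≠ 0 := sub_ne_zero.mpr hij
    set k := i - j with hkDef
    set u : F := (k ^ 2 - 4 * i * b ^ 2) / (4 * a * k) with huDef
    set v : F := (k - 2 * a * u) / (2 * b) with hvDef
    have h4F : (4 : F) ≠ 0 := by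
      have : (4 : F) = 2 * 2 := by norm_num
      rw [this]; exact mul_ne_zero h2F h2F
    have hc1 : 4 * a * k ≠ 0 := mul_ne_zero (mul_ne_zero h4F ha) hk
    have hc2 : 2 * b ≠ 0 := mul_ne_zero h2F hb
    have e1 : 4 * a * k * u = k ^ 2 - 4 * i * b ^ 2 := by
      have := (div_eq_iff hc1).mp huDef.symm
      linear_combination -this
    have e2 : 2 * b * v = k - 2 * a * u := by
      have := (div_eq_iff hc2).mp hvDef.symm
      linear_combination -this
    have hA : (2 * b) ^ 2 * (u ^ 2 + v ^ 2 - i) = 0 := by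
      linear_combination (2 * b * v + k - 2 * a * u) * e2 - e1 + 4 * u ^ 2 * hb2
    have heq1 : u ^ 2 + v ^ 2 = i := by
      have h := (mul_eq_zero.mp hA).resolve_left h4b
      linear_combination h
    have heq2 : (u - a) ^ 2 + (v - b) ^ 2 = j := by
      linear_combination heq1 - e2 + hb2
    refine ⟨(X.1 + u, X.2 + v), ?_, ?_⟩
    · rw [hquadX]; simpa using heq1
    · rw [hquadY]; simpa using heq2
  constructor
  · constructor
    · rintro ⟨Z, hZ1, hZ2⟩ hij
      subst hij
      rw [hquadX] at hZ1
      rw [hquadY] at hZ2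
      set u := Z.1 - X.1
      set v := Z.2 - X.2
      have hlin0 : 2 * a * u + 2 * b * v = 0 := by
        linear_combination hZ1 - hZ2 + hb2
      have hbi : (2 * b) ^ 2 * i = 0 := by
        linear_combination (-4) * b ^ 2 * hZ1 + (2 * b * v - 2 * a * u) * hlin0 + 4 * u ^ 2 * hb2
      exact hi ((mul_eq_zero.mp hbi).resolve_left h4b)
    · exact hexists
  · intro hij
    have hk : i - j ≠ 0 := sub_ne_zero.mpr hij
    rw [Nat.card_eq_one_iff_unique]
    constructor
    · constructor
      rintro ⟨Z, hZ1, hZ2⟩ ⟨W, hW1, hW2⟩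
      have key : ∀ P : F × F, quadrance X P = i → quadrance Y P = j →
          P.1 - X.1 = ((i - j) ^ 2 - 4 * i * b ^ 2) / (4 * a * (i - j)) ∧
          P.2 - X.2 = ((i - j) - 2 * a * (P.1 - X.1)) / (2 * b) := by
        intro P h1 h2
        rw [hquadX] at h1
        rw [hquadY] at h2
        set u := P.1 - X.1
        set v := P.2 - X.2
        have hlin : 2 * a * u + 2 * b * v = i - j := by
          linear_combination h1 - h2 + hb2
        have hu4 : 4 * a * (i - j) * u = (i - j) ^ 2 - 4 * i * b ^ 2 := by
          linear_combination (2 * b * v + (i - j) - 2 * a * u) * hlin - 4 * b ^ 2 * h1 + 4 * u ^ 2 * hb2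
        have hc1 : 4 * a * (i - j) ≠ 0 := by
          have h4F : (4 : F) = 2 * 2 := by norm_num
          exact mul_ne_zero (mul_ne_zero (by rw [h4F]; exact mul_ne_zero h2F h2F) ha) hk
        have hc2 : 2 * b ≠ 0 := mul_ne_zero h2F hb
        constructor
        · rw [eq_div_iff hc1]
          linear_combination hu4
        · rw [eq_div_iff hc2]
          linear_combination hlin
      obtain ⟨hZu, hZv⟩ := key Z hZ1 hZ2
      obtain ⟨hWu, hWv⟩ := key W hW1 hW2
      have h1 : Z.1 = W.1 := by
        have h := hZu.trans hWu.symm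
        linear_combination h
      have h2 : Z.2 = W.2 := by
        rw [h1] at hZv
        have h := hZv.trans hWv.symm
        linear_combination h
      exact Subtype.ext (Prod.ext h1 h2)
    · obtain ⟨Z, hZ⟩ := hexists hij
      exact ⟨⟨Z, hZ⟩⟩
end

section
/- Let q be an odd prime power with q ≡ 1 (mod 4), and define f(i,j,k) = ij - (i-j-k)²/4. For every nonzero i ∈ F_q, there exists a nonzero j ∈ F_q such that both f(i,i,j) and f(j,j,i) are squares in F_q. -/
open scoped Classical

open Finset
theorem stmt_12 (F : Type*) [Field F] [Fintype F] (q : ℕ)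
    (hcard : Fintype.card F = q) (hodd : Odd q) (h4 : q % 4 = 1)
    (i : F) (hi : i ≠ 0) :
    ∃ j : F, j ≠ 0 ∧
      IsSquare (i * i - (i - i - j) ^ 2 / 4) ∧
      IsSquare (j * j - (j - j - i) ^ 2 / 4) := by
  -- basic characteristic facts
  have hq5 : 5 ≤ q := by
    have h1 : 1 < Fintype.card F := Fintype.one_lt_card
    omega
  have hchar2 : ringChar F ≠ 2 := by
    intro h
    have := FiniteField.even_card_iff_char_two.mp h
    rw [hcard] at this
    omega
  have h2 : (2 : F) ≠ 0 := Ring.two_ne_zero hchar2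
  have h4F : (4 : F) ≠ 0 := by
    intro h
    apply h2
    have h22 : (2 : F) * 2 = 0 := by linear_combination h
    rcases mul_eq_zero.mp h22 with h' | h' <;> exact h'
  -- a square root of -1
  have hneg1 : IsSquare (-1 : F) := by
    rw [FiniteField.isSquare_neg_one_iff, hcard, h4]
    omega
  obtain ⟨I, hI⟩ := hneg1
  have hI2 : I * I = -1 := hI.symm
  have hIne : I ≠ 0 := by
    intro h
    have : (1 : F) = 0 := by linear_combination hI2 - I * h
    exact one_ne_zero this
  have h1ne : (1 : F) ≠ -1 := fun h => h2 (by linear_combination h)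
  have hIne1 : I ≠ 1 := by
    intro h
    exact h1ne (by linear_combination hI2 - (I + 1) * h)
  have hIneneg1 : I ≠ -1 := by
    intro h
    exact h1ne (by linear_combination hI2 - (I - 1) * h)
  have hInegI : I ≠ -I := by
    intro h
    apply hIne
    have h2I : (2 : F) * I = 0 := by linear_combination h
    rcases mul_eq_zero.mp h2I with h' | h'
    · exact absurd h' h2
    · exact h'
  -- key sets
  set A' : Finset F := univ.filter (fun t => t ≠ 0 ∧ IsSquare (4 - t ^ 2)) with hA'
  set B' : Finset F := univ.filter (fun t => t ≠ 0 ∧ IsSquare (4 * t ^ 2 - 1)) with hB'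
  have memA' : ∀ t : F, t ∈ A' ↔ t ≠ 0 ∧ IsSquare (4 - t ^ 2) := by
    intro t; simp [hA']
  have memB' : ∀ t : F, t ∈ B' ↔ t ≠ 0 ∧ IsSquare (4 * t ^ 2 - 1) := by
    intro t; simp [hB']
  -- 2 and -2 are in A'
  have h2A : (2 : F) ∈ A' := by
    rw [memA']
    refine ⟨h2, ⟨0, by ring⟩⟩
  have hneg2A : (-2 : F) ∈ A' := by
    rw [memA']
    exact ⟨neg_ne_zero.mpr h2, ⟨0, by ring⟩⟩
  have hne22 : (-2 : F) ≠ 2 := by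
    intro h
    exact h4F (by linear_combination -h)
  -- the excluded set S = {0, ±1, ±I}
  set S : Finset F := {0, 1, -1, I, -I} with hS
  have hScard : S.card = 5 := by
    rw [hS]
    rw [card_insert_of_notMem, card_insert_of_notMem, card_insert_of_notMem,
      card_insert_of_notMem, card_singleton]
    · simp only [mem_singleton]
      exact hInegI
    · simp only [mem_insert, mem_singleton]
      push_neg
      exact ⟨Ne.symm hIneneg1, fun h => hIne1 (neg_inj.mp h).symm⟩
    · simp only [mem_insert, mem_singleton]
      push_neg
      exact ⟨h1ne, Ne.symm hIne1, fun h => hIneneg1 (neg_eq_iff_eq_neg.mp h.symm)⟩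
    · simp only [mem_insert, mem_singleton]
      push_neg
      refine ⟨zero_ne_one, ?_, Ne.symm hIne, ?_⟩
      · exact Ne.symm (neg_ne_zero.mpr one_ne_zero)
      · exact Ne.symm (neg_ne_zero.mpr hIne)
  have hSccard : Sᶜ.card = q - 5 := by
    rw [card_compl, hScard, hcard]
  -- the map g v = v + v⁻¹ sends Sᶜ into A' \ {2, -2}, with fibers of size ≤ 2
  set g : F → F := fun v => v + v⁻¹ with hg
  set T2 : Finset F := (A'.erase 2).erase (-2) with hT2
  have hmaps : ∀ v ∈ Sᶜ, g v ∈ T2 := by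
    intro v hv
    rw [mem_compl, hS] at hv
    simp only [mem_insert, mem_singleton] at hv
    push_neg at hv
    obtain ⟨hv0, hv1, hvn1, hvI, hvnI⟩ := hv
    have hvv : v * v⁻¹ = 1 := mul_inv_cancel₀ hv0
    rw [hT2, mem_erase, mem_erase]
    refine ⟨?_, ?_, ?_⟩
    · -- g v ≠ -2
      intro h
      have hsq : (v + 1) * (v + 1) = 0 := by
        have h' : v * (v + v⁻¹) = v * (-2) := by rw [show v + v⁻¹ = (-2 : F) from h]
        linear_combination h' - hvv
      rcases mul_eq_zero.mp hsq with h' | h' <;>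
        exact hvn1 (by linear_combination h')
    · -- g v ≠ 2
      intro h
      have hsq : (v - 1) * (v - 1) = 0 := by
        have h' : v * (v + v⁻¹) = v * 2 := by rw [show v + v⁻¹ = (2 : F) from h]
        linear_combination h' - hvv
      rcases mul_eq_zero.mp hsq with h' | h' <;>
        exact hv1 (by linear_combination h')
    · -- g v ∈ A'
      rw [memA']
      constructor
      · -- g v ≠ 0
        intro h
        have hsq : (v - I) * (v + I) = 0 := by
          have h' : v * (v + v⁻¹) = v * 0 := by rw [show v + v⁻¹ = (0 : F) from h]
          linear_combination h' - hvv - hI2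
        rcases mul_eq_zero.mp hsq with h' | h'
        · exact hvI (by linear_combination h')
        · exact hvnI (by linear_combination h')
      · -- 4 - (g v)^2 is a square
        refine ⟨I * (v - v⁻¹), ?_⟩
        show 4 - (v + v⁻¹) ^ 2 = _
        linear_combination (-4 : F) * hvv - (v - v⁻¹) ^ 2 * hI2
  have hfiber : ∀ b ∈ T2, (Sᶜ.filter (fun v => g v = b)).card ≤ 2 := by
    intro b _
    rcases (Sᶜ.filter (fun v => g v = b)).eq_empty_or_nonempty with he | ⟨v₀, hv₀⟩
    · rw [he]; simp
    · rw [mem_filter, mem_compl, hS] at hv₀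
      obtain ⟨hv₀S, hv₀b⟩ := hv₀
      simp only [mem_insert, mem_singleton] at hv₀S
      push_neg at hv₀S
      have hv₀0 : v₀ ≠ 0 := hv₀S.1
      have hv₀2 : v₀ * v₀ - b * v₀ + 1 = 0 := by
        have h' : v₀ * (v₀ + v₀⁻¹) = v₀ * b := by rw [show v₀ + v₀⁻¹ = b from hv₀b]
        linear_combination h' - mul_inv_cancel₀ hv₀0
      have hsub : (Sᶜ.filter (fun v => g v = b)) ⊆ {v₀, v₀⁻¹} := by
        intro w hw
        rw [mem_filter, mem_compl, hS] at hw
        obtain ⟨hwS, hwb⟩ := hw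
        simp only [mem_insert, mem_singleton] at hwS
        push_neg at hwS
        have hw0 : w ≠ 0 := hwS.1
        have hw2 : w * w - b * w + 1 = 0 := by
          have h' : w * (w + w⁻¹) = w * b := by rw [show w + w⁻¹ = b from hwb]
          linear_combination h' - mul_inv_cancel₀ hw0
        have hkey : (w - v₀) * (w * v₀ - 1) = 0 := by
          linear_combination v₀ * hw2 - w * hv₀2
        simp only [mem_insert, mem_singleton]
        rcases mul_eq_zero.mp hkey with h' | h'
        · left; linear_combination h'
        · right
          exact eq_inv_of_mul_eq_one_left (by linear_combination h')
      calc (Sᶜ.filter (fun v => g v = b)).card ≤ ({v₀, v₀⁻¹} : Finset F).card :=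
            card_le_card hsub
        _ ≤ 2 := (card_insert_le _ _).trans (by simp)
  have hcount : Sᶜ.card ≤ 2 * T2.card :=
    card_le_mul_card_image_of_maps_to hmaps 2 hfiber
  have hT2card : T2.card = A'.card - 2 := by
    rw [hT2, card_erase_of_mem, card_erase_of_mem h2A]
    · omega
    · rw [mem_erase]; exact ⟨hne22, hneg2A⟩
  have hA2 : 2 ≤ A'.card := by
    have hsub : ({2, -2} : Finset F) ⊆ A' := by
      intro x hx
      simp only [mem_insert, mem_singleton] at hx
      rcases hx with h | h <;> rw [h]
      · exact h2A
      · exact hneg2A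
    have : ({2, -2} : Finset F).card = 2 := by
      rw [card_insert_of_notMem, card_singleton]
      simp only [mem_singleton]
      exact fun h => hne22 h.symm
    rw [← this]
    exact card_le_card hsub
  have hAbig : q - 1 ≤ 2 * A'.card := by omega
  -- B' is the image of A' under inversion, hence has the same size
  have hABcard : A'.card = B'.card := by
    refine card_bij' (fun a _ => a⁻¹) (fun b _ => b⁻¹) ?_ ?_ ?_ ?_
    · intro a ha
      rw [memA'] at ha
      obtain ⟨ha0, s, hs⟩ := ha
      rw [memB']
      refine ⟨inv_ne_zero ha0, ⟨s * a⁻¹, ?_⟩⟩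
      linear_combination (a⁻¹) ^ 2 * hs + (a * a⁻¹ + 1) * mul_inv_cancel₀ ha0
    · intro b hb
      rw [memB'] at hb
      obtain ⟨hb0, s, hs⟩ := hb
      rw [memA']
      refine ⟨inv_ne_zero hb0, ⟨s * b⁻¹, ?_⟩⟩
      linear_combination (b⁻¹) ^ 2 * hs - 4 * (b * b⁻¹ + 1) * mul_inv_cancel₀ hb0
    · intro a _; exact inv_inv a
    · intro b _; exact inv_inv b
  -- A' and B' must intersect
  have hinter : (A' ∩ B').Nonempty := by
    rcases (A' ∩ B').eq_empty_or_nonempty with he | h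
    · exfalso
      have hdisj : Disjoint A' B' := disjoint_iff_inter_eq_empty.mpr he
      have hUcard : (A' ∪ B').card = A'.card + B'.card := card_union_of_disjoint hdisj
      have hsubT : A' ∪ B' ⊆ ({0} : Finset F)ᶜ := by
        intro x hx
        rw [mem_union] at hx
        rw [mem_compl, mem_singleton]
        rcases hx with h | h
        · exact ((memA' x).mp h).1
        · exact ((memB' x).mp h).1
      have hTcard : (({0} : Finset F)ᶜ).card = q - 1 := by
        rw [card_compl, card_singleton, hcard]
      have hUeq : A' ∪ B' = ({0} : Finset F)ᶜ := by
        apply eq_of_subset_of_card_le hsubT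
        rw [hTcard, hUcard, ← hABcard]
        omega
      have h1mem : (1 : F) ∈ A' ∪ B' := by
        rw [hUeq, mem_compl, mem_singleton]
        exact one_ne_zero
      have h3sq : IsSquare ((3 : F)) := by
        rw [mem_union] at h1mem
        rcases h1mem with h | h
        · have := ((memA' 1).mp h).2
          convert this using 2
          norm_num
        · have := ((memB' 1).mp h).2
          convert this using 2
          norm_num
      have h1A : (1 : F) ∈ A' := by
        rw [memA']
        refine ⟨one_ne_zero, ?_⟩
        have : (4 : F) - 1 ^ 2 = 3 := by norm_num
        rw [this]; exact h3sq
      have h1B : (1 : F) ∈ B' := by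
        rw [memB']
        refine ⟨one_ne_zero, ?_⟩
        have : (4 : F) * 1 ^ 2 - 1 = 3 := by norm_num
        rw [this]; exact h3sq
      have : (1 : F) ∈ A' ∩ B' := mem_inter.mpr ⟨h1A, h1B⟩
      rw [he] at this
      exact notMem_empty _ this
    · exact h
  -- conclude
  obtain ⟨t, ht⟩ := hinter
  rw [mem_inter] at ht
  obtain ⟨htA, htB⟩ := ht
  rw [memA'] at htA
  rw [memB'] at htB
  obtain ⟨ht0, s1, hs1⟩ := htA
  obtain ⟨_, s2, hs2⟩ := htB
  refine ⟨i * t, mul_ne_zero hi ht0, ⟨i / 2 * s1, ?_⟩, ⟨i / 2 * s2, ?_⟩⟩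
  · field_simp
    linear_combination 4 * hs1
  · field_simp
    linear_combination 4 * hs2
end

section
/- Let q be an odd prime power with q ≡ 3 (mod 4). Let X, Y ∈ F_q² with Q(X,Y) a nonzero square in F_q. Then the number of points Z ∈ F_q² such that both Q(X,Z) and Q(Y,Z) are nonzero squares equals (q² - 5)/4. -/
open scoped Classical

namespace Stmt15Aux

open Finset

variable {F : Type*} [Field F] [Fintype F]

def cN (z : F × F) : F := z.1 ^ 2 + z.2 ^ 2

def cmul (z w : F × F) : F × F := (z.1 * w.1 - z.2 * w.2, z.1 * w.2 + z.2 * w.1)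

noncomputable def cinv (z : F × F) : F × F := (z.1 / cN z, -z.2 / cN z)

lemma cN_mul (z w : F × F) : cN (cmul z w) = cN z * cN w := by
  simp only [cN, cmul]; ring

lemma quadrance_eq (A B : F × F) : quadrance A B = cN (B - A) := by
  simp [quadrance, cN]

lemma quadrance_symm (A B : F × F) : quadrance A B = quadrance B A := by
  simp only [quadrance]; ring

lemma cN_ne_zero (h : ¬ IsSquare (-1 : F)) {z : F × F} (hz : z ≠ 0) : cN z ≠ 0 := by
  intro h0
  have h0' : z.1 ^ 2 + z.2 ^ 2 = 0 := h0
  rcases eq_or_ne z.2 0 with h2 | h2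
  · have h1 : z.1 = 0 := by
      have hsq : z.1 ^ 2 = 0 := by rw [h2] at h0'; linear_combination h0'
      exact pow_eq_zero_iff (n := 2) (by norm_num) |>.mp hsq
    exact hz (Prod.ext h1 h2)
  · exact h ⟨z.1 / z.2, by
      field_simp
      linear_combination -h0'⟩

lemma cN_cinv_mul {z : F × F} (hz : cN z ≠ 0) : cN (cinv z) = (cN z)⁻¹ := by
  have hz' : z.1 ^ 2 + z.2 ^ 2 ≠ 0 := hz
  simp only [cN, cinv]
  field_simp

lemma cinv_cmul_cancel {z : F × F} (hz : cN z ≠ 0) (w : F × F) :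
    cmul (cinv z) (cmul z w) = w := by
  have hz' : z.1 ^ 2 + z.2 ^ 2 ≠ 0 := hz
  have hN : (cN z) = z.1 ^ 2 + z.2 ^ 2 := rfl
  apply Prod.ext <;>
  · simp only [cmul, cinv, hN]
    field_simp
    ring

lemma cmul_cinv_cancel {z : F × F} (hz : cN z ≠ 0) (w : F × F) :
    cmul z (cmul (cinv z) w) = w := by
  have hz' : z.1 ^ 2 + z.2 ^ 2 ≠ 0 := hz
  have hN : (cN z) = z.1 ^ 2 + z.2 ^ 2 := rfl
  apply Prod.ext <;>
  · simp only [cmul, cinv, hN]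
    field_simp
    ring

/-- the key norm identity `N(z-w) = N(z) * N(1 - z⁻¹ w)` -/
lemma cN_sub_eq {z : F × F} (hz : cN z ≠ 0) (w : F × F) :
    cN (z - w) = cN z * cN (((1 : F), (0 : F)) - cmul (cinv z) w) := by
  have hz' : z.1 ^ 2 + z.2 ^ 2 ≠ 0 := hz
  have hN : (cN z) = z.1 ^ 2 + z.2 ^ 2 := rfl
  simp only [cN, cmul, cinv, hN, Prod.fst_sub, Prod.snd_sub]
  field_simp
  ring

variable (F)

/-- there is an element of nonsquare norm -/
lemma exists_nonsquare_norm (hodd : Fintype.card F % 2 = 1) (h2 : ringChar F ≠ 2) :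
    ∃ g : F × F, ¬ IsSquare (cN g) := by
  obtain ⟨c, hc⟩ := FiniteField.exists_nonsquare h2
  obtain ⟨a, b, hab⟩ : ∃ a b : F,
      (Polynomial.X ^ 2 : Polynomial F).eval a + (Polynomial.X ^ 2 - Polynomial.C c).eval b = 0 :=
    FiniteField.exists_root_sum_quadratic (Polynomial.degree_X_pow 2)
      (Polynomial.degree_X_pow_sub_C (by norm_num) _) hodd
  refine ⟨(a, b), ?_⟩
  have : cN ((a, b) : F × F) = c := by
    simp only [Polynomial.eval_add, Polynomial.eval_sub, Polynomial.eval_pow, Polynomial.eval_X,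
      Polynomial.eval_C] at hab
    show a ^ 2 + b ^ 2 = c
    linear_combination hab
  rwa [this]

lemma sum_chi_cN (hodd : Fintype.card F % 2 = 1) (h2 : ringChar F ≠ 2) :
    ∑ z : F × F, quadraticChar F (cN z) = 0 := by
  obtain ⟨g, hg⟩ := exists_nonsquare_norm F hodd h2
  have hgne : cN g ≠ 0 := fun h => hg (h ▸ (by exact ⟨0, by ring⟩))
  have hchi : quadraticChar F (cN g) = -1 := quadraticChar_neg_one_iff_not_isSquare.mpr hg
  have hbij : Function.Bijective (fun z : F × F => cmul g z) :=
    Function.bijective_iff_has_inverse.mpr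
      ⟨fun z => cmul (cinv g) z, fun z => cinv_cmul_cancel hgne z,
        fun z => cmul_cinv_cancel hgne z⟩
  have h1 : ∑ z : F × F, quadraticChar F (cN z)
      = ∑ z : F × F, quadraticChar F (cN (cmul g z)) :=
    (Fintype.sum_bijective _ hbij (fun z => quadraticChar F (cN (cmul g z)))
      (fun z => quadraticChar F (cN z)) fun z => rfl).symm
  have h2' : ∑ z : F × F, quadraticChar F (cN (cmul g z))
      = -∑ z : F × F, quadraticChar F (cN z) := by
    rw [← Finset.sum_neg_distrib]
    refine Finset.sum_congr rfl fun z _ => ?_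
    rw [cN_mul, map_mul, hchi]; ring
  have := h1.trans h2'
  linarith

variable {F}

/-- the twisted sum: `∑ χ(N z · N (z - w)) = -1` for `N w ≠ 0`. -/
lemma sum_chi_twisted (hodd : Fintype.card F % 2 = 1) (h2 : ringChar F ≠ 2)
    (hneg : ¬ IsSquare (-1 : F)) {w : F × F} (hw : cN w ≠ 0) :
    ∑ z : F × F, quadraticChar F (cN z * cN (z - w)) = -1 := by
  classical
  have hzero : (0 : F × F) ∈ (univ : Finset (F × F)) := mem_univ _
  rw [← Finset.sum_erase_add _ _ hzero]
  have hterm0 : quadraticChar F (cN (0 : F × F) * cN ((0 : F × F) - w)) = 0 := by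
    have : cN (0 : F × F) = 0 := by simp [cN]
    rw [this, zero_mul, quadraticChar_zero]
  rw [hterm0, add_zero]
  -- rewrite each term
  have key : ∀ z ∈ (univ : Finset (F × F)).erase 0,
      quadraticChar F (cN z * cN (z - w))
        = quadraticChar F (cN (((1 : F), (0 : F)) - cmul (cinv z) w)) := by
    intro z hz
    have hz0 : z ≠ 0 := Finset.ne_of_mem_erase hz
    have hNz : cN z ≠ 0 := cN_ne_zero hneg hz0
    rw [cN_sub_eq hNz w, show cN z * (cN z * cN (((1 : F), (0 : F)) - cmul (cinv z) w))
        = cN z ^ 2 * cN (((1 : F), (0 : F)) - cmul (cinv z) w) by ring,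
      map_mul, quadraticChar_sq_one' hNz, one_mul]
  rw [Finset.sum_congr rfl key]
  -- now change variables u = z⁻¹ * w, an involution on the nonzero elements
  have hbij : ∑ z ∈ (univ : Finset (F × F)).erase 0,
      quadraticChar F (cN (((1 : F), (0 : F)) - cmul (cinv z) w))
      = ∑ u ∈ (univ : Finset (F × F)).erase 0,
      quadraticChar F (cN (((1 : F), (0 : F)) - u)) := by
    refine Finset.sum_bij' (fun z _ => cmul (cinv z) w)
      (fun u hu => cmul (cinv u) w) ?_ ?_ ?_ ?_ ?_
    · intro z hz
      have hz0 : z ≠ 0 := Finset.ne_of_mem_erase hz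
      have hNz : cN z ≠ 0 := cN_ne_zero hneg hz0
      refine Finset.mem_erase.mpr ⟨?_, mem_univ _⟩
      intro h
      have h' : cmul (cinv z) w = 0 := h
      have : cN (cmul (cinv z) w) = 0 := by rw [h']; simp [cN]
      rw [cN_mul, cN_cinv_mul hNz] at this
      exact hw (by
        rcases mul_eq_zero.mp this with h' | h'
        · exact absurd h' (inv_ne_zero hNz)
        · exact h')
    · intro u hu
      have hu0 : u ≠ 0 := Finset.ne_of_mem_erase hu
      have hNu : cN u ≠ 0 := cN_ne_zero hneg hu0
      refine Finset.mem_erase.mpr ⟨?_, mem_univ _⟩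
      intro h
      have h' : cmul (cinv u) w = 0 := h
      have : cN (cmul (cinv u) w) = 0 := by rw [h']; simp [cN]
      rw [cN_mul, cN_cinv_mul hNu] at this
      exact hw (by
        rcases mul_eq_zero.mp this with h' | h'
        · exact absurd h' (inv_ne_zero hNu)
        · exact h')
    · intro z hz
      have hz0 : z ≠ 0 := Finset.ne_of_mem_erase hz
      have hNz : cN z ≠ 0 := cN_ne_zero hneg hz0
      -- cmul (cinv (cmul (cinv z) w)) w = z
      have h1 : cmul z (cmul (cinv z) w) = w := cmul_cinv_cancel hNz w
      have hNzw : cN (cmul (cinv z) w) ≠ 0 := by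
        rw [cN_mul, cN_cinv_mul hNz]
        exact mul_ne_zero (inv_ne_zero hNz) hw
      -- apply cinv_cmul_cancel with z' := cmul (cinv z) w and w' := z ;
      -- cmul (cinv z') (cmul z' z) = z, and cmul z' z = cmul z z' = w
      have hcomm : cmul (cmul (cinv z) w) z = w := by
        have : cmul (cmul (cinv z) w) z = cmul z (cmul (cinv z) w) := by
          apply Prod.ext <;> (simp only [cmul]; ring)
        rw [this, h1]
      have := cinv_cmul_cancel hNzw z
      rwa [hcomm] at this
    · intro u hu
      have hu0 : u ≠ 0 := Finset.ne_of_mem_erase hu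
      have hNu : cN u ≠ 0 := cN_ne_zero hneg hu0
      have h1 : cmul u (cmul (cinv u) w) = w := cmul_cinv_cancel hNu w
      have hNuw : cN (cmul (cinv u) w) ≠ 0 := by
        rw [cN_mul, cN_cinv_mul hNu]
        exact mul_ne_zero (inv_ne_zero hNu) hw
      have hcomm : cmul (cmul (cinv u) w) u = w := by
        have : cmul (cmul (cinv u) w) u = cmul u (cmul (cinv u) w) := by
          apply Prod.ext <;> (simp only [cmul]; ring)
        rw [this, h1]
      have := cinv_cmul_cancel hNuw u
      rwa [hcomm] at this
    · intro z hz
      rfl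
  rw [hbij]
  -- finally ∑_{u ≠ 0} χ(N(1 - u)) = T - χ(N 1) = -1
  have hsplit : ∑ u ∈ (univ : Finset (F × F)).erase 0,
      quadraticChar F (cN (((1 : F), (0 : F)) - u))
      = (∑ u : F × F, quadraticChar F (cN (((1 : F), (0 : F)) - u)))
        - quadraticChar F (cN (((1 : F), (0 : F)) - 0)) := by
    rw [← Finset.sum_erase_add _ _ hzero]; ring
  rw [hsplit]
  have htrans : ∑ u : F × F, quadraticChar F (cN (((1 : F), (0 : F)) - u))
      = ∑ u : F × F, quadraticChar F (cN u) := by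
    exact Fintype.sum_equiv (Equiv.subLeft ((1 : F), (0 : F))) _ _ (fun u => rfl)
  rw [htrans, sum_chi_cN F hodd h2]
  have : cN (((1 : F), (0 : F)) - 0) = 1 := by simp [cN]
  rw [this, map_one]
  norm_num

end Stmt15Aux

open Stmt15Aux Finset

theorem stmt_15 (F : Type*) [Field F] [Fintype F] (q : ℕ)
    (hcard : Fintype.card F = q) (hodd : Odd q) (h4 : q % 4 = 3)
    (X Y : F × F) (hsq : IsSquare (quadrance X Y)) (hne : quadrance X Y ≠ 0) :
    Nat.card {Z : F × F //
        (IsSquare (quadrance X Z) ∧ quadrance X Z ≠ 0) ∧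
        (IsSquare (quadrance Y Z) ∧ quadrance Y Z ≠ 0)} = (q ^ 2 - 5) / 4 := by
  classical
  have hodd' : Fintype.card F % 2 = 1 := by
    rw [hcard]; omega
  have h2 : ringChar F ≠ 2 := by
    intro h
    have := FiniteField.even_card_iff_char_two.mp h
    omega
  have hneg : ¬ IsSquare (-1 : F) := by
    rw [FiniteField.isSquare_neg_one_iff, hcard]
    simp [h4]
  set χ := quadraticChar F with hχ
  set P : F × F → Prop := fun Z =>
    (IsSquare (quadrance X Z) ∧ quadrance X Z ≠ 0) ∧
    (IsSquare (quadrance Y Z) ∧ quadrance Y Z ≠ 0) with hP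
  have hXY : X ≠ Y := by
    intro h
    apply hne
    rw [h]
    simp [quadrance]
  have hchiXY : χ (quadrance X Y) = 1 := (quadraticChar_one_iff_isSquare hne).mpr hsq
  -- pointwise identity
  have hchi0 : χ (0 : F) = 0 := quadraticChar_zero
  have hpoint : ∀ z : F × F,
      (1 + χ (quadrance X z)) * (1 + χ (quadrance Y z))
        = (if P z then 4 else 0) + (if z = X then 2 else 0) + (if z = Y then 2 else 0) := by
    intro z
    by_cases hzX : z = X
    · subst hzX
      have ha : quadrance z z = 0 := by simp [quadrance]
      have hb : χ (quadrance Y z) = 1 := by rw [quadrance_symm]; exact hchiXY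
      have hPz : ¬ P z := fun h => h.1.2 ha
      rw [if_pos rfl, if_neg hPz, if_neg hXY, ha, hchi0, hb]
      norm_num
    · by_cases hzY : z = Y
      · subst hzY
        have hb : quadrance z z = 0 := by simp [quadrance]
        have ha : χ (quadrance X z) = 1 := hchiXY
        have hPz : ¬ P z := fun h => h.2.2 hb
        rw [if_pos rfl, if_neg hPz, if_neg hzX, hb, hchi0, ha]
        norm_num
      · have ha0 : quadrance X z ≠ 0 := by
          rw [quadrance_eq]
          exact cN_ne_zero hneg (sub_ne_zero.mpr hzX)
        have hb0 : quadrance Y z ≠ 0 := by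
          rw [quadrance_eq]
          exact cN_ne_zero hneg (sub_ne_zero.mpr hzY)
        rw [if_neg hzX, if_neg hzY, add_zero, add_zero]
        rcases quadraticChar_dichotomy ha0 with ha | ha <;>
          rcases quadraticChar_dichotomy hb0 with hb | hb
        · have hPz : P z := ⟨⟨(quadraticChar_one_iff_isSquare ha0).mp ha, ha0⟩,
            ⟨(quadraticChar_one_iff_isSquare hb0).mp hb, hb0⟩⟩
          rw [if_pos hPz, show χ (quadrance X z) = 1 from ha,
            show χ (quadrance Y z) = 1 from hb]
          norm_num
        · have hPz : ¬ P z := by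
            intro h
            have h1 := (quadraticChar_one_iff_isSquare hb0).mpr h.2.1
            rw [h1] at hb; norm_num at hb
          rw [if_neg hPz, show χ (quadrance Y z) = -1 from hb]
          ring
        · have hPz : ¬ P z := by
            intro h
            have h1 := (quadraticChar_one_iff_isSquare ha0).mpr h.1.1
            rw [h1] at ha; norm_num at ha
          rw [if_neg hPz, show χ (quadrance X z) = -1 from ha]
          ring
        · have hPz : ¬ P z := by
            intro h
            have h1 := (quadraticChar_one_iff_isSquare ha0).mpr h.1.1
            rw [h1] at ha; norm_num at ha
          rw [if_neg hPz, show χ (quadrance X z) = -1 from ha]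
          ring
  -- sum the pointwise identity
  have hsum1 : ∑ z : F × F, χ (quadrance X z) = 0 := by
    have : ∀ z : F × F, χ (quadrance X z) = χ (cN (z - X)) := fun z => by
      rw [quadrance_eq]
    rw [Finset.sum_congr rfl fun z _ => this z]
    rw [show ∑ z : F × F, χ (cN (z - X)) = ∑ z : F × F, χ (cN z) from
      Fintype.sum_equiv (Equiv.subRight X) _ _ (fun z => rfl)]
    exact sum_chi_cN F hodd' h2
  have hsum2 : ∑ z : F × F, χ (quadrance Y z) = 0 := by
    have : ∀ z : F × F, χ (quadrance Y z) = χ (cN (z - Y)) := fun z => by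
      rw [quadrance_eq]
    rw [Finset.sum_congr rfl fun z _ => this z]
    rw [show ∑ z : F × F, χ (cN (z - Y)) = ∑ z : F × F, χ (cN z) from
      Fintype.sum_equiv (Equiv.subRight Y) _ _ (fun z => rfl)]
    exact sum_chi_cN F hodd' h2
  have hw : cN (Y - X) ≠ 0 := by
    rw [← quadrance_eq]; exact hne
  have hsum3 : ∑ z : F × F, χ (quadrance X z) * χ (quadrance Y z) = -1 := by
    have key : ∀ z : F × F, χ (quadrance X z) * χ (quadrance Y z)
        = χ (cN (z - X) * cN ((z - X) - (Y - X))) := by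
      intro z
      rw [← map_mul, quadrance_eq, quadrance_eq]
      have h' : (z - X) - (Y - X) = z - Y := by abel
      rw [h']
    rw [Finset.sum_congr rfl fun z _ => key z]
    rw [show ∑ z : F × F, χ (cN (z - X) * cN ((z - X) - (Y - X)))
        = ∑ u : F × F, χ (cN u * cN (u - (Y - X))) from
      Fintype.sum_equiv (Equiv.subRight X) _ _ (fun z => rfl)]
    exact sum_chi_twisted hodd' h2 hneg hw
  have hcardFF : (Fintype.card (F × F) : ℤ) = (q : ℤ) ^ 2 := by
    rw [Fintype.card_prod, hcard]
    push_cast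
    ring
  have hLHS : ∑ z : F × F, (1 + χ (quadrance X z)) * (1 + χ (quadrance Y z))
      = (q : ℤ) ^ 2 - 1 := by
    have expand : ∀ z : F × F, (1 + χ (quadrance X z)) * (1 + χ (quadrance Y z))
        = 1 + χ (quadrance X z) + χ (quadrance Y z)
          + χ (quadrance X z) * χ (quadrance Y z) := fun z => by ring
    rw [Finset.sum_congr rfl fun z _ => expand z]
    rw [Finset.sum_add_distrib, Finset.sum_add_distrib, Finset.sum_add_distrib,
      hsum1, hsum2, hsum3, Finset.sum_const, Finset.card_univ, nsmul_eq_mul, mul_one]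
    rw [hcardFF]
    ring
  set c : ℕ := (Finset.univ.filter P).card with hc
  have hRHS : ∑ z : F × F, ((if P z then (4:ℤ) else 0) + (if z = X then 2 else 0)
      + (if z = Y then 2 else 0)) = 4 * (c : ℤ) + 4 := by
    rw [Finset.sum_add_distrib, Finset.sum_add_distrib]
    rw [Finset.sum_ite_eq' Finset.univ X (fun _ => (2:ℤ)),
      Finset.sum_ite_eq' Finset.univ Y (fun _ => (2:ℤ))]
    rw [Finset.sum_ite, Finset.sum_const, Finset.sum_const_zero, add_zero, nsmul_eq_mul]
    have hfe : (Finset.filter (fun x => P x) Finset.univ) = Finset.filter P Finset.univ := rfl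
    rw [hfe, ← hc, if_pos (Finset.mem_univ X), if_pos (Finset.mem_univ Y)]
    ring
  have heq : 4 * (c : ℤ) + 4 = (q : ℤ) ^ 2 - 1 := by
    rw [← hRHS, ← hLHS]
    exact (Finset.sum_congr rfl fun z _ => (hpoint z)).symm
  have hcnat : Nat.card {Z : F × F //
      (IsSquare (quadrance X Z) ∧ quadrance X Z ≠ 0) ∧
      (IsSquare (quadrance Y Z) ∧ quadrance Y Z ≠ 0)} = c := by
    rw [Nat.card_eq_fintype_card, hc]
    exact Fintype.card_subtype _
  rw [hcnat]
  have hq3 : 3 ≤ q := by omega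
  have hq5 : 5 ≤ q ^ 2 := by nlinarith
  have : (4 * c : ℤ) = ((q ^ 2 - 5 : ℕ) : ℤ) := by
    have : ((q ^ 2 - 5 : ℕ) : ℤ) = (q : ℤ) ^ 2 - 5 := by
      push_cast [Nat.cast_sub hq5]
      ring
    omega
  have h4c : 4 * c = q ^ 2 - 5 := by exact_mod_cast this
  omega
end

section
/- Let q be an odd prime power with q ≡ 3 (mod 4). Let X, Y ∈ F_q² be distinct points with Q(X,Y) a nonsquare in F_q. Then the number of points Z ∈ F_q² such that both Q(X,Z) and Q(Y,Z) are nonzero squares equals (q² - 1)/4. -/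
open scoped Classical

open Finset in
theorem oneD (K : Type*) [Field K] [Fintype K] (Q : ℕ) (hQ : Fintype.card K = Q)
    (hodd : Odd Q) (h4 : Q % 4 = 1) (u : K) (hu : u ≠ 0) (hns : ¬ IsSquare u) :
    Nat.card {w : K // (IsSquare w ∧ w ≠ 0) ∧ (IsSquare (w - u) ∧ w - u ≠ 0)} = (Q - 1) / 4 := by
  have h2 : Q % 2 = 1 := Nat.odd_iff.mp hodd
  have hchar : ringChar K ≠ 2 := by
    intro h
    have := FiniteField.even_card_of_char_two (F := K) h
    rw [hQ] at this; omega
  set χ := quadraticChar K with hχ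
  have hchiu : χ u = -1 := quadraticChar_neg_one_iff_not_isSquare.mpr hns
  have hm1 : IsSquare (-1 : K) := by
    rw [FiniteField.isSquare_neg_one_iff, hQ]; omega
  have hchim1 : χ (-1) = 1 :=
    (quadraticChar_one_iff_isSquare (neg_ne_zero.mpr one_ne_zero)).mpr hm1
  have hchinegu : χ (-u) = -1 := by
    rw [show (-u) = -1 * u by ring, map_mul, hchim1, hchiu]; ring
  set P : K → Prop := fun w => (IsSquare w ∧ w ≠ 0) ∧ (IsSquare (w - u) ∧ w - u ≠ 0) with hP
  have key : ∀ w : K, (1 + χ w) * (1 + χ (w - u)) = if P w then 4 else 0 := by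
    intro w
    by_cases hw0 : w = 0
    · subst hw0
      rw [if_neg (by simp [hP])]
      simp [quadraticChar_zero, zero_sub, hchinegu]
    · by_cases hwu : w - u = 0
      · rw [if_neg (by simp [hP, hwu])]
        rw [hwu, show w = u by linear_combination hwu]
        simp [quadraticChar_zero, hchiu]
      · rcases quadraticChar_dichotomy hw0 with h1 | h1 <;>
          rcases quadraticChar_dichotomy hwu with hh2 | hh2
        · rw [if_pos ⟨⟨(quadraticChar_one_iff_isSquare hw0).mp h1, hw0⟩,
            ⟨(quadraticChar_one_iff_isSquare hwu).mp hh2, hwu⟩⟩, h1, hh2]; ring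
        · rw [if_neg (by simp only [hP]; intro h; exact
            (quadraticChar_neg_one_iff_not_isSquare.mp hh2) h.2.1), h1, hh2]; ring
        · rw [if_neg (by simp only [hP]; intro h; exact
            (quadraticChar_neg_one_iff_not_isSquare.mp h1) h.1.1), h1, hh2]; ring
        · rw [if_neg (by simp only [hP]; intro h; exact
            (quadraticChar_neg_one_iff_not_isSquare.mp h1) h.1.1), h1, hh2]; ring
  set N : ℕ := (univ.filter P).card with hN
  have hsum4 : ∑ w : K, ((1 + χ w) * (1 + χ (w - u))) = 4 * (N : ℤ) := by
    rw [Finset.sum_congr rfl (fun w _ => key w), Finset.sum_ite, Finset.sum_const,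
      Finset.sum_const_zero, add_zero, nsmul_eq_mul]
    ring
  have hS1 : ∑ w : K, χ w = 0 := quadraticChar_sum_zero hchar
  have hS2 : ∑ w : K, χ (w - u) = 0 := by
    rw [Fintype.sum_equiv (Equiv.subRight u) (fun w => χ (w - u)) (fun w => χ w) (fun w => rfl)]
    exact hS1
  -- the bijection ψ
  have hS3 : ∑ w : K, χ (w * (w - u)) = -1 := by
    set ψ : K ≃ K :=
      { toFun := fun w => 1 - u * w⁻¹
        invFun := fun t => u * (1 - t)⁻¹
        left_inv := by
          intro w
          by_cases hw : w = 0
          · simp [hw]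
          · field_simp
            rw [sub_sub_cancel, div_self hu]
        right_inv := by
          intro t
          by_cases ht : t = 1
          · simp [ht]
          · have : (1 : K) - t ≠ 0 := sub_ne_zero.mpr (Ne.symm ht)
            field_simp; ring } with hψ
    have hpt : ∀ w ∈ (univ : Finset K).erase 0, χ (w * (w - u)) = χ (ψ w) := by
      intro w hw
      have hw0 : w ≠ 0 := (Finset.mem_erase.mp hw).1
      have : w * (w - u) = w ^ 2 * (1 - u * w⁻¹) := by field_simp
      rw [this, map_mul, quadraticChar_sq_one' hw0, one_mul]
      rfl
    have e0 : (0 : K) ∈ (univ : Finset K) := Finset.mem_univ 0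
    have h1 : ∑ w : K, χ (w * (w - u)) = χ (0 * (0 - u)) + ∑ w ∈ univ.erase 0, χ (w * (w - u)) :=
      (Finset.add_sum_erase univ _ e0).symm
    have h2 : ∑ w : K, χ (ψ w) = χ (ψ 0) + ∑ w ∈ univ.erase 0, χ (ψ w) :=
      (Finset.add_sum_erase univ _ e0).symm
    have h3 : ∑ w : K, χ (ψ w) = 0 := by rw [Equiv.sum_comp ψ χ]; exact hS1
    have h4' : χ (ψ 0) = 1 := by
      have : ψ 0 = 1 := by simp [hψ]
      rw [this]; exact map_one χ
    rw [Finset.sum_congr rfl hpt] at h1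
    rw [h1, zero_mul, quadraticChar_zero]
    rw [h2, h4'] at h3
    linarith
  have expand : ∑ w : K, ((1 + χ w) * (1 + χ (w - u)))
      = (Q : ℤ) + (∑ w : K, χ w) + (∑ w : K, χ (w - u)) + ∑ w : K, χ (w * (w - u)) := by
    have : ∀ w : K, (1 + χ w) * (1 + χ (w - u)) = 1 + χ w + χ (w - u) + χ w * χ (w - u) := by
      intro w; ring
    rw [Finset.sum_congr rfl (fun w _ => this w)]
    rw [Finset.sum_add_distrib, Finset.sum_add_distrib, Finset.sum_add_distrib,
      Finset.sum_const, Finset.card_univ, hQ, nsmul_eq_mul, mul_one]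
    congr 1
    exact Finset.sum_congr rfl (fun w _ => (map_mul χ w (w - u)).symm)
  have hZ : 4 * (N : ℤ) = (Q : ℤ) - 1 := by
    rw [← hsum4, expand, hS1, hS2, hS3]; ring
  have hcardN : Nat.card {w : K // P w} = N := by
    rw [Nat.card_eq_fintype_card, Fintype.card_subtype]
  calc Nat.card {w : K // (IsSquare w ∧ w ≠ 0) ∧ (IsSquare (w - u) ∧ w - u ≠ 0)}
      = N := hcardN
    _ = (Q - 1) / 4 := by omega

theorem stmt_16 (F : Type*) [Field F] [Fintype F] (q : ℕ)
    (hcard : Fintype.card F = q) (hodd : Odd q) (h4 : q % 4 = 3)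
    (X Y : F × F) (hXY : X ≠ Y) (hns : ¬ IsSquare (quadrance X Y)) :
    Nat.card {Z : F × F //
        (IsSquare (quadrance X Z) ∧ quadrance X Z ≠ 0) ∧
        (IsSquare (quadrance Y Z) ∧ quadrance Y Z ≠ 0)} = (q ^ 2 - 1) / 4 := by
  have h2 : q % 2 = 1 := Nat.odd_iff.mp hodd
  have hm1 : ¬ IsSquare (-1 : F) := by
    rw [FiniteField.isSquare_neg_one_iff, hcard]; omega
  -- the field K = F[i]
  set f : Polynomial F := Polynomial.X ^ 2 + Polynomial.C 1 with hf
  have hdeg : f.natDegree = 2 := by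
    rw [hf]; compute_degree!
  have hf0 : f ≠ 0 := fun h => by simp [h] at hdeg
  have hirr : Irreducible f := by
    rw [Polynomial.irreducible_iff_roots_eq_zero_of_degree_le_three (by omega) (by omega)]
    rw [Multiset.eq_zero_iff_forall_notMem]
    intro r hr
    rw [Polynomial.mem_roots hf0, Polynomial.IsRoot] at hr
    apply hm1
    have : r ^ 2 + 1 = 0 := by simpa [hf] using hr
    exact ⟨r, by linear_combination -this⟩
  haveI : Fact (Irreducible f) := ⟨hirr⟩
  set K := AdjoinRoot f with hK
  haveI : Module.Finite F K := Module.Finite.of_basis (AdjoinRoot.powerBasis hf0).basis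
  haveI : Finite K := Module.finite_of_finite F
  haveI : Fintype K := Fintype.ofFinite K
  have hKcard : Fintype.card K = q ^ 2 := by
    rw [Module.card_eq_pow_finrank (K := F) (V := K), hcard]
    congr 1
    rw [(AdjoinRoot.powerBasis hf0).finrank, AdjoinRoot.powerBasis_dim, hdeg]
  haveI : Nontrivial K := inferInstance
  set i : K := AdjoinRoot.root f with hi
  have hi2 : i ^ 2 = -1 := by
    have h : AdjoinRoot.mk f (Polynomial.X ^ 2 + Polynomial.C 1) = 0 := by
      rw [← hf]; exact AdjoinRoot.mk_self
    simp only [map_add, map_pow, map_one, AdjoinRoot.mk_X] at h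
    linear_combination h
  set e : F × F → K := fun w => algebraMap F K w.1 + algebraMap F K w.2 * i with he
  have hainj : Function.Injective (algebraMap F K) := (algebraMap F K).injective
  have hsub : ∀ a b : F × F, e (a - b) = e a - e b := by
    intro a b
    simp only [he, Prod.fst_sub, Prod.snd_sub, map_sub]
    ring
  have he0 : e 0 = 0 := by simp [he]
  have hinj : Function.Injective e := by
    intro a b hab
    have hzero : e (a - b) = 0 := by rw [hsub, hab, sub_self]
    have : a - b = 0 := by
      set w := a - b
      by_cases hb2 : w.2 = 0
      · have h1 : algebraMap F K w.1 = 0 := by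
          have := hzero
          rw [he] at this
          simp only [hb2, map_zero, zero_mul, add_zero] at this
          exact this
        have : w.1 = 0 := hainj (by rw [h1, map_zero])
        exact Prod.ext this hb2
      · exfalso
        apply hm1
        have hb2' : algebraMap F K w.2 ≠ 0 := fun h => hb2 (hainj (by rw [h, map_zero]))
        have hie : i = - (algebraMap F K w.1 / algebraMap F K w.2) := by
          rw [he] at hzero
          rw [← neg_div, eq_div_iff hb2']
          linear_combination hzero
        have : (algebraMap F K (w.1 / w.2)) ^ 2 = algebraMap F K (-1) := by
          rw [map_div₀, map_neg, map_one, ← hi2, hie]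
          ring
        have hF : (w.1 / w.2) ^ 2 = -1 := by
          apply hainj
          rw [map_pow, this, map_neg, map_one]
        exact ⟨w.1 / w.2, by linear_combination -hF⟩
    have := sub_eq_zero.mp this
    exact this
  have hbij : Function.Bijective e := by
    rw [Fintype.bijective_iff_injective_and_card]
    refine ⟨hinj, ?_⟩
    rw [hKcard, Fintype.card_prod, hcard]
    ring
  -- Frobenius
  set p : ℕ := ringChar F with hp
  haveI hcpF : CharP F p := ringChar.charP F
  obtain ⟨n, hpprime, hcardp⟩ := FiniteField.card F p
  haveI : Fact p.Prime := ⟨hpprime⟩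
  haveI hcpK : CharP K p := charP_of_injective_algebraMap hainj p
  have hfrob : ∀ x y : K, (x + y) ^ q = x ^ q + y ^ q := by
    intro x y
    rw [← hcard, hcardp]
    exact add_pow_char_pow x y p n
  have hiq : i ^ q = -i := by
    obtain ⟨k, hk⟩ : ∃ k, q = 2 * k + 1 := by
      obtain ⟨k, hk⟩ := hodd; exact ⟨k, by omega⟩
    have hkodd : Odd k := by rw [hk] at h4; rw [Nat.odd_iff]; omega
    calc i ^ q = (i ^ 2) ^ k * i := by rw [hk, pow_add, pow_mul, pow_one]
    _ = (-1) ^ k * i := by rw [hi2]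
    _ = -i := by rw [Odd.neg_one_pow hkodd]; ring
  have haq : ∀ a : F, (algebraMap F K a) ^ q = algebraMap F K a := by
    intro a
    rw [← map_pow, ← hcard, FiniteField.pow_card]
  have hconj : ∀ w : F × F, (e w) ^ q = algebraMap F K w.1 - algebraMap F K w.2 * i := by
    intro w
    rw [he]
    simp only []
    rw [hfrob, mul_pow, haq, haq, hiq]
    ring
  have hnorm : ∀ w : F × F, (e w) ^ (q + 1) = algebraMap F K (w.1 ^ 2 + w.2 ^ 2) := by
    intro w
    rw [pow_succ, hconj]
    rw [map_add, map_pow, map_pow, he]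
    simp only []
    linear_combination (-(algebraMap F K w.2 ^ 2)) * hi2
  have hene : ∀ w : F × F, w ≠ 0 → e w ≠ 0 := by
    intro w hw hc
    exact hw (hinj (hc.trans he0.symm))
  have hnrmne : ∀ w : F × F, w ≠ 0 → w.1 ^ 2 + w.2 ^ 2 ≠ 0 := by
    intro w hw hc
    have : (e w) ^ (q + 1) = 0 := by rw [hnorm, hc, map_zero]
    exact hene w hw ((pow_eq_zero_iff (Nat.succ_ne_zero q)).mp this)
  have hcharF : ringChar F ≠ 2 := by
    intro h
    have := FiniteField.even_card_of_char_two (F := F) h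
    rw [hcard] at this; omega
  have hcharK : ringChar K ≠ 2 := by
    intro h
    have := FiniteField.even_card_of_char_two (F := K) h
    rw [hKcard] at this
    have h5 : q ^ 2 % 2 = 1 := by rw [Nat.pow_mod, h2]
    omega
  have hexp : (q + 1) * (q / 2) = q ^ 2 / 2 := by
    obtain ⟨k, hk⟩ := hodd
    subst hk
    have e1 : (2 * k + 1) / 2 = k := by omega
    have e2 : (2 * k + 1) ^ 2 = 2 * (2 * k ^ 2 + 2 * k) + 1 := by ring
    have e3 : (2 * (2 * k ^ 2 + 2 * k) + 1) / 2 = 2 * k ^ 2 + 2 * k := by omega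
    rw [e1, e2, e3]
    ring
  have hsq : ∀ w : F × F, w ≠ 0 → (IsSquare (w.1 ^ 2 + w.2 ^ 2) ↔ IsSquare (e w)) := by
    intro w hw
    rw [FiniteField.isSquare_iff hcharF (hnrmne w hw), FiniteField.isSquare_iff hcharK (hene w hw),
      hKcard, hcard]
    have key : algebraMap F K ((w.1 ^ 2 + w.2 ^ 2) ^ (q / 2)) = (e w) ^ (q ^ 2 / 2) := by
      rw [map_pow, ← hnorm, ← pow_mul, hexp]
    constructor
    · intro h
      rw [← key, h, map_one]
    · intro h
      apply hainj
      rw [key, h, map_one]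
  have hcond : ∀ w : F × F,
      (IsSquare (w.1 ^ 2 + w.2 ^ 2) ∧ w.1 ^ 2 + w.2 ^ 2 ≠ 0) ↔ (IsSquare (e w) ∧ e w ≠ 0) := by
    intro w
    by_cases hw : w = 0
    · subst hw
      simp [he0]
    · simp [hsq w hw, hnrmne w hw, hene w hw]
  -- reduction
  set u : K := e (Y - X) with hu
  have hYX : Y - X ≠ 0 := sub_ne_zero.mpr (Ne.symm hXY)
  have hune : u ≠ 0 := hene _ hYX
  have hquadXY : quadrance X Y = (Y - X).1 ^ 2 + (Y - X).2 ^ 2 := rfl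
  have hnsu : ¬ IsSquare u := by
    rw [← hsq _ hYX, ← hquadXY]
    exact hns
  have hEquiv : {Z : F × F //
        (IsSquare (quadrance X Z) ∧ quadrance X Z ≠ 0) ∧
        (IsSquare (quadrance Y Z) ∧ quadrance Y Z ≠ 0)} ≃
      {v : K // (IsSquare v ∧ v ≠ 0) ∧ (IsSquare (v - u) ∧ v - u ≠ 0)} := by
    apply Equiv.subtypeEquiv ((Equiv.subRight X).trans (Equiv.ofBijective e hbij))
    intro Z
    have hv : ((Equiv.subRight X).trans (Equiv.ofBijective e hbij)) Z = e (Z - X) := rfl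
    rw [hv]
    have h1 : quadrance X Z = (Z - X).1 ^ 2 + (Z - X).2 ^ 2 := rfl
    have h2' : quadrance Y Z = (Z - Y).1 ^ 2 + (Z - Y).2 ^ 2 := rfl
    have h3 : e (Z - X) - u = e (Z - Y) := by
      rw [hu, ← hsub, sub_sub_sub_cancel_right]
    rw [h1, h2', hcond (Z - X), hcond (Z - Y), h3]
  rw [Nat.card_congr hEquiv]
  have hq2mod : q ^ 2 % 4 = 1 := by
    rw [Nat.pow_mod, h4]
  have hq2odd : Odd (q ^ 2) := by rw [Nat.odd_iff, Nat.pow_mod, h2]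
  exact oneD K (q ^ 2) hKcard hq2odd hq2mod u hune hnsu
end

section
/- Let q be an odd prime power with q ≡ 3 (mod 4). The quadrance graph V_q on vertex set F_q², where X and Y are adjacent iff Q(X,Y) is a nonzero square, is a strongly regular graph with parameters: every vertex has degree (q²-1)/2, any two adjacent vertices have (q²-5)/4 common neighbours, and any two distinct non-adjacent vertices have (q²-1)/4 common neighbours. -/
open scoped Classical
open Finset Polynomial

def quadAdj {F : Type*} [Field F] (X Y : F × F) : Prop :=
  X ≠ Y ∧ IsSquare (quadrance X Y) ∧ quadrance X Y ≠ 0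

section Counting
variable {K : Type*} [Field K] [Fintype K] [DecidableEq K]

lemma sum_shift (hK : ringChar K ≠ 2) (a : K) :
    ∑ w : K, quadraticChar K (w - a) = 0 := by
  rw [← quadraticChar_sum_zero hK]
  exact Fintype.sum_equiv (Equiv.subRight a) _ _ (fun w => rfl)

lemma sum_mul_char (hK : ringChar K ≠ 2) {a b : K} (hab : a ≠ b) :
    ∑ w : K, (quadraticChar K (w - a)) * (quadraticChar K (w - b)) = -1 := by
  set c := b - a with hc
  have hc0 : c ≠ 0 := sub_ne_zero.mpr hab.symm
  have h1 : ∑ w : K, (quadraticChar K (w - a)) * (quadraticChar K (w - b))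
      = ∑ t : K, (quadraticChar K t) * (quadraticChar K (t - c)) := by
    refine (Fintype.sum_equiv (Equiv.addRight a) _ _ (fun w => ?_)).symm
    simp only [Equiv.coe_addRight]
    rw [show w + a - a = w from by ring, show w + a - b = w - c from by rw [hc]; ring]
  rw [h1]
  have h2 : ∑ t : K, (quadraticChar K t) * (quadraticChar K (t - c))
      = ∑ t ∈ univ.erase (0:K), (quadraticChar K t) * (quadraticChar K (t - c)) := by
    rw [← Finset.add_sum_erase _ _ (mem_univ (0:K))]
    simp
  rw [h2]
  have h3 : ∀ t ∈ univ.erase (0:K),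
      (quadraticChar K t) * (quadraticChar K (t - c)) = quadraticChar K (1 - c * t⁻¹) := by
    intro t ht
    have ht0 : t ≠ 0 := (Finset.mem_erase.mp ht).1
    rw [← map_mul]
    have : t * (t - c) = t^2 * (1 - c * t⁻¹) := by field_simp
    rw [this, map_mul]
    have : quadraticChar K (t^2) = 1 := quadraticChar_sq_one' ht0
    rw [this, one_mul]
  rw [Finset.sum_congr rfl h3]
  have h4 : ∑ t ∈ univ.erase (0:K), quadraticChar K (1 - c * t⁻¹)
      = ∑ u ∈ univ.erase (1:K), quadraticChar K u := by
    refine Finset.sum_bij' (fun t _ => 1 - c * t⁻¹) (fun u _ => c * (1 - u)⁻¹) ?_ ?_ ?_ ?_ ?_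
    · intro t ht
      have ht0 : t ≠ 0 := (Finset.mem_erase.mp ht).1
      refine Finset.mem_erase.mpr ⟨?_, mem_univ _⟩
      intro h
      have : c * t⁻¹ = 0 := by linear_combination -h
      exact hc0 (by simpa [ht0] using this)
    · intro u hu
      have hu1 : u ≠ 1 := (Finset.mem_erase.mp hu).1
      refine Finset.mem_erase.mpr ⟨?_, mem_univ _⟩
      have : (1:K) - u ≠ 0 := sub_ne_zero.mpr hu1.symm
      exact mul_ne_zero hc0 (inv_ne_zero this)
    · intro t ht
      have ht0 : t ≠ 0 := (Finset.mem_erase.mp ht).1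
      have h1 : (1:K) - (1 - c * t⁻¹) = c * t⁻¹ := by ring
      show c * (1 - (1 - c * t⁻¹))⁻¹ = t
      rw [h1]
      field_simp
    · intro u hu
      have hu1 : u ≠ 1 := (Finset.mem_erase.mp hu).1
      have h1 : (1:K) - u ≠ 0 := sub_ne_zero.mpr hu1.symm
      show 1 - c * (c * (1 - u)⁻¹)⁻¹ = u
      field_simp
      ring
    · intro t ht
      rfl
  rw [h4]
  have h5 : quadraticChar K 1 + ∑ u ∈ univ.erase (1:K), quadraticChar K u = 0 := by
    rw [Finset.add_sum_erase _ _ (mem_univ (1:K))]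
    exact quadraticChar_sum_zero hK
  have h6 : quadraticChar K 1 = 1 := by simp
  omega

lemma card_one (hK : ringChar K ≠ 2) :
    2 * (Nat.card {z : K // quadraticChar K z = 1} : ℤ) = Fintype.card K - 1 := by
  classical
  rw [Nat.card_eq_fintype_card, Fintype.card_subtype]
  have key : ∀ z : K, (if quadraticChar K z = 1 then (2:ℤ) else 0)
      = 1 + quadraticChar K z - (if z = 0 then 1 else 0) := by
    intro z
    by_cases h0 : z = 0
    · simp [h0]
    · rcases quadraticChar_dichotomy h0 with h | h <;> simp [h, h0]
  have hsum := Finset.sum_congr rfl (fun z (_ : z ∈ (univ : Finset K)) => key z)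
  rw [Finset.sum_sub_distrib, Finset.sum_add_distrib, Finset.sum_const,
    quadraticChar_sum_zero hK, Finset.sum_ite_eq' univ (0:K) (fun _ => (1:ℤ))] at hsum
  simp only [mem_univ, if_true, card_univ, add_zero, nsmul_eq_mul, mul_one] at hsum
  have hL : (∑ z : K, if quadraticChar K z = 1 then (2:ℤ) else 0)
      = 2 * ((univ.filter fun z : K => quadraticChar K z = 1).card : ℤ) := by
    rw [Finset.sum_ite, Finset.sum_const, Finset.sum_const]
    simp [mul_comm]
  rw [hL] at hsum
  linarith

lemma card_two (hK : ringChar K ≠ 2) {a b : K} (hab : a ≠ b) :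
    4 * (Nat.card {z : K // quadraticChar K (z - a) = 1 ∧ quadraticChar K (z - b) = 1} : ℤ)
      = Fintype.card K - 3 - quadraticChar K (a - b) - quadraticChar K (b - a) := by
  classical
  rw [Nat.card_eq_fintype_card, Fintype.card_subtype]
  have key : ∀ z : K,
      (if quadraticChar K (z - a) = 1 ∧ quadraticChar K (z - b) = 1 then (4:ℤ) else 0)
      = (1 + quadraticChar K (z - a)) * (1 + quadraticChar K (z - b))
        - (if z = a then 1 + quadraticChar K (a - b) else 0)
        - (if z = b then 1 + quadraticChar K (b - a) else 0) := by
    intro z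
    by_cases hza : z = a
    · subst hza
      simp [sub_self, hab]
    · by_cases hzb : z = b
      · subst hzb
        simp [sub_self, hab, Ne.symm hab, hza]
      · have h1 : z - a ≠ 0 := sub_ne_zero.mpr hza
        have h2 : z - b ≠ 0 := sub_ne_zero.mpr hzb
        simp only [if_neg hza, if_neg hzb, sub_zero]
        rcases quadraticChar_dichotomy h1 with h | h <;>
          rcases quadraticChar_dichotomy h2 with h' | h' <;>
          simp [h, h']
  have hsum := Finset.sum_congr rfl (fun z (_ : z ∈ (univ : Finset K)) => key z)
  have hexp : ∑ z : K, (1 + quadraticChar K (z - a)) * (1 + quadraticChar K (z - b))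
      = Fintype.card K - 1 := by
    have : ∀ z : K, (1 + quadraticChar K (z - a)) * (1 + quadraticChar K (z - b))
        = 1 + quadraticChar K (z - a) + quadraticChar K (z - b)
          + quadraticChar K (z - a) * quadraticChar K (z - b) := by intro z; ring
    rw [Finset.sum_congr rfl (fun z _ => this z)]
    rw [Finset.sum_add_distrib, Finset.sum_add_distrib, Finset.sum_add_distrib,
      Finset.sum_const, sum_shift hK, sum_shift hK, sum_mul_char hK hab]
    simp only [Finset.card_univ, nsmul_eq_mul, mul_one, add_zero]
    ring
  rw [Finset.sum_sub_distrib, Finset.sum_sub_distrib, hexp,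
    Finset.sum_ite_eq' univ a, Finset.sum_ite_eq' univ b] at hsum
  simp only [mem_univ, if_true] at hsum
  have hL : (∑ z : K, if quadraticChar K (z - a) = 1 ∧ quadraticChar K (z - b) = 1
      then (4:ℤ) else 0)
      = 4 * ((univ.filter fun z : K =>
          quadraticChar K (z - a) = 1 ∧ quadraticChar K (z - b) = 1).card : ℤ) := by
    rw [Finset.sum_ite, Finset.sum_const, Finset.sum_const]
    simp [mul_comm]
  rw [hL] at hsum
  linarith
end Counting

theorem stmt_17 (F : Type*) [Field F] [Fintype F] (q : ℕ)
    (hcard : Fintype.card F = q) (hodd : Odd q) (h4 : q % 4 = 3) :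
    (∀ X : F × F, Nat.card {Y : F × F // quadAdj X Y} = (q ^ 2 - 1) / 2) ∧
    (∀ X Y : F × F, quadAdj X Y →
      Nat.card {Z : F × F // quadAdj X Z ∧ quadAdj Y Z} = (q ^ 2 - 5) / 4) ∧
    (∀ X Y : F × F, X ≠ Y → ¬ quadAdj X Y →
      Nat.card {Z : F × F // quadAdj X Z ∧ quadAdj Y Z} = (q ^ 2 - 1) / 4) := by
  classical
  have hq3 : 3 ≤ q := by omega
  have hF2 : ringChar F ≠ 2 := by
    intro h
    have := FiniteField.even_card_of_char_two (F := F) h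
    rw [hcard] at this
    omega
  have hns : ¬ IsSquare (-1 : F) := by
    rw [FiniteField.isSquare_neg_one_iff, hcard]
    simp [h4]
  set f : Polynomial F := X ^ 2 + C 1 with hf
  have hdeg : f.natDegree = 2 := by
    rw [hf]
    compute_degree!
  have hf0 : f ≠ 0 := fun h => by simp [h] at hdeg
  have hirr : Irreducible f := by
    rw [Polynomial.irreducible_iff_roots_eq_zero_of_degree_le_three (by omega) (by omega)]
    rw [Multiset.eq_zero_iff_forall_notMem]
    intro r hr
    rw [Polynomial.mem_roots hf0, Polynomial.IsRoot, hf] at hr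
    simp only [eval_add, eval_pow, eval_X, eval_C] at hr
    exact hns ⟨r, by linear_combination -hr⟩
  haveI := Fact.mk hirr
  set K := AdjoinRoot f with hK
  haveI : Fintype K := Module.fintypeOfFintype (AdjoinRoot.powerBasis hf0).basis
  have hcardK : Fintype.card K = q ^ 2 := by
    rw [Module.card_fintype (AdjoinRoot.powerBasis hf0).basis, hcard]
    congr 1
    simp [AdjoinRoot.powerBasis, hdeg]
  set i : K := AdjoinRoot.root f with hi
  have hi2 : i ^ 2 = -1 := by
    have h0 : i ^ 2 + 1 = 0 := by
      have := AdjoinRoot.eval₂_root f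
      rw [hf] at this
      simpa using this
    linear_combination h0
  set φ : F →+* K := algebraMap F K with hφ
  have hφinj : Function.Injective φ := φ.injective
  set e : F × F → K := fun v => φ v.1 + φ v.2 * i with he
  have hesub : ∀ v w : F × F, e v - e w = e (v - w) := by
    intro v w
    simp only [he, Prod.fst_sub, Prod.snd_sub, map_sub]
    ring
  have he0 : ∀ v : F × F, e v = 0 → v = 0 := by
    rintro ⟨x, y⟩ h
    simp only [he] at h
    by_cases hy : y = 0
    · subst hy
      simp only [map_zero, zero_mul, add_zero] at h
      have : x = 0 := hφinj (by simpa using h)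
      simp [this]
    · exfalso
      apply hns
      have hyK : φ y ≠ 0 := fun hh => hy (hφinj (by simpa using hh))
      have hival : i = φ (-x / y) := by
        rw [map_div₀, eq_div_iff hyK, map_neg]
        linear_combination h
      have : φ ((-x / y) ^ 2) = φ (-1) := by
        rw [map_pow, ← hival, hi2, map_neg, map_one]
      have h2 : (-x / y) ^ 2 = -1 := hφinj this
      exact ⟨-x / y, by rw [← h2]; ring⟩
  have heinj : Function.Injective e := by
    intro v w h
    have : v - w = 0 := he0 _ (by rw [← hesub, h, sub_self])
    exact sub_eq_zero.mp this
  have hebij : Function.Bijective e := by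
    rw [Fintype.bijective_iff_injective_and_card]
    refine ⟨heinj, ?_⟩
    rw [Fintype.card_prod, hcard, hcardK, sq]
  -- characteristic facts
  obtain ⟨n, hp, hqpn⟩ := FiniteField.card F (ringChar F)
  rw [hcard] at hqpn
  haveI : Fact (Nat.Prime (ringChar F)) := ⟨hp⟩
  haveI : CharP K (ringChar F) := charP_of_injective_algebraMap hφinj (ringChar F)
  have hxq : ∀ x : F, x ^ q = x := by
    intro x
    rw [← hcard]
    exact FiniteField.pow_card x
  have hiq : i ^ q = -i := by
    have hodd2 : Odd (q / 2) := ⟨q / 4, by omega⟩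
    calc i ^ q = (i ^ 2) ^ (q / 2) * i := by
          rw [← pow_mul, ← pow_succ]
          congr 1
          omega
      _ = (-1 : K) ^ (q / 2) * i := by rw [hi2]
      _ = -i := by rw [hodd2.neg_one_pow]; ring
  have hfrob : ∀ x y : F, (φ x + φ y * i) ^ q = φ x - φ y * i := by
    intro x y
    have h1 : (φ x + φ y * i) ^ q = (φ x) ^ q + (φ y * i) ^ q := by
      rw [hqpn]
      exact add_pow_char_pow _ _ _ _
    rw [h1, mul_pow, hiq, ← map_pow, ← map_pow, hxq, hxq]
    ring
  have hpow : ∀ x y : F, (φ x + φ y * i) ^ (q + 1) = φ (x ^ 2 + y ^ 2) := by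
    intro x y
    rw [pow_succ, hfrob, map_add, map_pow, map_pow]
    linear_combination (-(φ y) ^ 2) * hi2
  have hK2 : ringChar K ≠ 2 := by
    intro h
    have := FiniteField.even_card_of_char_two (F := K) h
    rw [hcardK] at this
    have hqq : q ^ 2 % 2 = 1 := Nat.odd_iff.mp hodd.pow
    omega
  have hexp : q ^ 2 / 2 = (q + 1) * (q / 2) := by
    obtain ⟨m, rfl⟩ := hodd
    have h1 : (2 * m + 1) ^ 2 = 4 * (m * m) + 4 * m + 1 := by ring
    have h2 : (2 * m + 1 + 1) * ((2 * m + 1) / 2) = 2 * (m * m) + 2 * m := by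
      have : (2 * m + 1) / 2 = m := by omega
      rw [this]
      ring
    omega
  -- the adjacency bridge
  have hbridge : ∀ X Y : F × F, quadAdj X Y ↔ quadraticChar K (e Y - e X) = 1 := by
    intro X Y
    rw [hesub]
    have hz : e (Y - X) = φ (Y.1 - X.1) + φ (Y.2 - X.2) * i := by
      simp only [he, Prod.fst_sub, Prod.snd_sub]
    set x : F := Y.1 - X.1
    set y : F := Y.2 - X.2
    rw [hz]
    set z : K := φ x + φ y * i with hzdef
    have key : z ^ (q + 1) = φ (x ^ 2 + y ^ 2) := hpow x y
    have hquad : quadrance X Y = x ^ 2 + y ^ 2 := rfl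
    constructor
    · rintro ⟨hne, hsq, h0⟩
      rw [hquad] at hsq h0
      have hz0 : z ≠ 0 := by
        intro h
        apply h0
        apply hφinj
        rw [map_zero, ← key, h]
        exact zero_pow (by omega)
      rw [quadraticChar_one_iff_isSquare hz0, FiniteField.isSquare_iff hK2 hz0, hcardK,
        hexp, pow_mul, key, ← map_pow, ← map_one φ]
      congr 1
      have := (FiniteField.isSquare_iff hF2 h0).mp hsq
      rwa [hcard] at this
    · intro h1
      have hz0 : z ≠ 0 := by
        intro h
        rw [h] at h1
        simp [quadraticChar_zero] at h1
      have ha0 : x ^ 2 + y ^ 2 ≠ 0 := by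
        intro h
        rw [h, map_zero] at key
        exact hz0 ((pow_eq_zero_iff (n := q + 1) (by omega)).mp key)
      refine ⟨?_, ?_, by rwa [hquad]⟩
      · intro h
        apply hz0
        rw [hzdef]
        simp [x, y, h]
      · rw [hquad, FiniteField.isSquare_iff hF2 ha0, hcard]
        have hsqz : IsSquare z := (quadraticChar_one_iff_isSquare hz0).mp h1
        have h2 := (FiniteField.isSquare_iff hK2 hz0).mp hsqz
        rw [hcardK, hexp, pow_mul, key, ← map_pow, ← map_one φ] at h2
        exact hφinj h2
  -- symmetry of adjacency
  have hsymm : ∀ X Y : F × F, quadAdj X Y → quadAdj Y X := by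
    rintro X Y ⟨h1, h2, h3⟩
    have hq : quadrance Y X = quadrance X Y := by
      unfold quadrance
      ring
    exact ⟨h1.symm, by rwa [hq], by rwa [hq]⟩
  have h9 : 9 ≤ q ^ 2 := by
    calc 9 = 3 * 3 := rfl
    _ ≤ q * q := Nat.mul_le_mul hq3 hq3
    _ = q ^ 2 := (sq q).symm
  set E : (F × F) ≃ K := Equiv.ofBijective e hebij with hE
  refine ⟨?_, ?_, ?_⟩
  · intro X
    have e1 : {Y : F × F // quadAdj X Y} ≃ {z : K // quadraticChar K (z - e X) = 1} :=
      E.subtypeEquiv (fun Y => by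
        rw [hbridge X Y]
        exact Iff.rfl)
    have e2 : {z : K // quadraticChar K (z - e X) = 1} ≃ {w : K // quadraticChar K w = 1} :=
      (Equiv.subRight (e X)).subtypeEquiv (fun z => Iff.rfl)
    rw [Nat.card_congr (e1.trans e2)]
    have hc1 := card_one (K := K) hK2
    rw [hcardK] at hc1
    omega
  · intro X Y hXY
    have hne : X ≠ Y := hXY.1
    have hadj1 : quadraticChar K (e Y - e X) = 1 := (hbridge X Y).mp hXY
    have hadj2 : quadraticChar K (e X - e Y) = 1 := (hbridge Y X).mp (hsymm X Y hXY)
    have hneK : e X ≠ e Y := fun h => hne (heinj h)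
    have e1 : {Z : F × F // quadAdj X Z ∧ quadAdj Y Z} ≃
        {z : K // quadraticChar K (z - e X) = 1 ∧ quadraticChar K (z - e Y) = 1} :=
      E.subtypeEquiv (fun Z => by
        rw [hbridge X Z, hbridge Y Z]
        exact Iff.rfl)
    rw [Nat.card_congr e1]
    have hc2 := card_two (K := K) hK2 hneK
    rw [hcardK, hadj1, hadj2] at hc2
    omega
  · intro X Y hne hXY
    have hneK : e X ≠ e Y := fun h => hne (heinj h)
    have hz1 : e Y - e X ≠ 0 := sub_ne_zero.mpr (Ne.symm hneK)
    have hz2 : e X - e Y ≠ 0 := sub_ne_zero.mpr hneK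
    have hadj1 : quadraticChar K (e Y - e X) = -1 := by
      rcases quadraticChar_dichotomy hz1 with h | h
      · exact absurd ((hbridge X Y).mpr h) hXY
      · exact h
    have hadj2 : quadraticChar K (e X - e Y) = -1 := by
      rcases quadraticChar_dichotomy hz2 with h | h
      · exact absurd (hsymm Y X ((hbridge Y X).mpr h)) hXY
      · exact h
    have e1 : {Z : F × F // quadAdj X Z ∧ quadAdj Y Z} ≃
        {z : K // quadraticChar K (z - e X) = 1 ∧ quadraticChar K (z - e Y) = 1} :=
      E.subtypeEquiv (fun Z => by
        rw [hbridge X Z, hbridge Y Z]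
        exact Iff.rfl)
    rw [Nat.card_congr e1]
    have hc2 := card_two (K := K) hK2 hneK
    rw [hcardK, hadj1, hadj2] at hc2
    omega
end

section
/- Let q be an odd prime power with q ≡ 3 (mod 4). Every vertex of the quadrance graph V_q has degree exactly (q² - 1)/2; that is, for each X ∈ F_q², the number of Y ∈ F_q² such that Q(X,Y) is a nonzero square equals (q² - 1)/2. -/
open scoped Classical

theorem stmt_18 (F : Type*) [Field F] [Fintype F] (q : ℕ)
    (hcard : Fintype.card F = q) (hodd : Odd q) (h4 : q % 4 = 3)
    (X : F × F) :
    Nat.card {Y : F × F // IsSquare (quadrance X Y) ∧ quadrance X Y ≠ 0} =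
      (q ^ 2 - 1) / 2 := by
  classical
  subst hcard
  -- characteristic is not 2
  have hchar : ringChar F ≠ 2 := by
    rw [ne_eq, FiniteField.even_card_iff_char_two]
    obtain ⟨k, hk⟩ := hodd
    omega
  -- -1 is not a square
  have hneg1 : ¬ IsSquare (-1 : F) := by
    rw [FiniteField.isSquare_neg_one_iff]
    simp [h4]
  -- a nonsquare n
  obtain ⟨n, hn⟩ := FiniteField.exists_nonsquare hchar
  have hn0 : n ≠ 0 := fun h => hn (h ▸ IsSquare.zero)
  -- n is a sum of two squares
  obtain ⟨a, b, hab⟩ : ∃ a b : F, a ^ 2 + b ^ 2 = n := by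
    obtain ⟨a, b, hab⟩ : ∃ a b : F, (Polynomial.X ^ 2 : Polynomial F).eval a +
        (Polynomial.X ^ 2 - Polynomial.C n).eval b = 0 :=
      FiniteField.exists_root_sum_quadratic (Polynomial.degree_X_pow 2)
        (Polynomial.degree_X_pow_sub_C (by norm_num) _)
        (Nat.odd_iff.mp hodd)
    refine ⟨a, b, ?_⟩
    simp only [Polynomial.eval_pow, Polynomial.eval_X, Polynomial.eval_sub,
      Polynomial.eval_C] at hab
    linear_combination hab
  -- multiplicative facts about nonsquares
  have hmul1 : ∀ s : F, s ≠ 0 → IsSquare s → ¬ IsSquare (n * s) := by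
    intro s hs0 hs
    rw [← quadraticChar_neg_one_iff_not_isSquare, map_mul,
      quadraticChar_neg_one_iff_not_isSquare.mpr hn,
      (quadraticChar_one_iff_isSquare hs0).mpr hs]
    ring
  have hmul2 : ∀ s : F, ¬ IsSquare s → IsSquare (n * s) ∧ n * s ≠ 0 := by
    intro s hs
    have hs0 : s ≠ 0 := fun h => hs (h ▸ IsSquare.zero)
    have h1 : quadraticChar F (n * s) = 1 := by
      rw [map_mul, quadraticChar_neg_one_iff_not_isSquare.mpr hn,
        quadraticChar_neg_one_iff_not_isSquare.mpr hs]
      ring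
    have hns0 : n * s ≠ 0 := mul_ne_zero hn0 hs0
    exact ⟨(quadraticChar_one_iff_isSquare hns0).mp h1, hns0⟩
  -- the rotation-dilation map
  set φ : F × F → F × F := fun Y =>
    (X.1 + a * (Y.1 - X.1) - b * (Y.2 - X.2),
     X.2 + b * (Y.1 - X.1) + a * (Y.2 - X.2)) with hφ
  have hφQ : ∀ Y, quadrance X (φ Y) = n * quadrance X Y := by
    intro Y
    have : quadrance X (φ Y) = (a ^ 2 + b ^ 2) * quadrance X Y := by
      simp only [hφ, quadrance]
      ring
    rw [this, hab]
  have hφinj : Function.Injective φ := by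
    intro Y Y' h
    have h1 := congrArg Prod.fst h
    have h2 := congrArg Prod.snd h
    simp only [hφ] at h1 h2
    have e1 : (a ^ 2 + b ^ 2) * (Y.1 - Y'.1) = 0 := by linear_combination a * h1 + b * h2
    have e2 : (a ^ 2 + b ^ 2) * (Y.2 - Y'.2) = 0 := by linear_combination a * h2 - b * h1
    rw [hab] at e1 e2
    have f1 : Y.1 = Y'.1 := sub_eq_zero.mp ((mul_eq_zero.mp e1).resolve_left hn0)
    have f2 : Y.2 = Y'.2 := sub_eq_zero.mp ((mul_eq_zero.mp e2).resolve_left hn0)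
    exact Prod.ext f1 f2
  -- the three finsets
  set S : Finset (F × F) :=
    Finset.univ.filter (fun Y => IsSquare (quadrance X Y) ∧ quadrance X Y ≠ 0) with hS
  set N : Finset (F × F) :=
    Finset.univ.filter (fun Y => ¬ IsSquare (quadrance X Y)) with hN
  have hSN : S.card ≤ N.card := by
    apply Finset.card_le_card_of_injOn φ
    · intro Y hY
      rw [Finset.mem_coe, hS, Finset.mem_filter] at hY
      rw [Finset.mem_coe, hN, Finset.mem_filter]
      exact ⟨Finset.mem_univ _, by
        rw [hφQ]; exact hmul1 _ hY.2.2 hY.2.1⟩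
    · exact fun x _ y _ h => hφinj h
  have hNS : N.card ≤ S.card := by
    apply Finset.card_le_card_of_injOn φ
    · intro Y hY
      rw [Finset.mem_coe, hN, Finset.mem_filter] at hY
      rw [Finset.mem_coe, hS, Finset.mem_filter]
      refine ⟨Finset.mem_univ _, ?_⟩
      rw [hφQ]
      exact hmul2 _ hY.2
    · exact fun x _ y _ h => hφinj h
  have hScard : S.card = N.card := le_antisymm hSN hNS
  -- the zero set is {X}
  have hzero : Finset.univ.filter (fun Y => quadrance X Y = 0) = {X} := by
    ext Y
    simp only [Finset.mem_filter, Finset.mem_univ, true_and, Finset.mem_singleton]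
    constructor
    · intro h
      simp only [quadrance] at h
      by_cases hv : Y.2 - X.2 = 0
      · rw [hv] at h
        have h1 : (Y.1 - X.1) ^ 2 = 0 := by linear_combination h
        have h1' : Y.1 - X.1 = 0 := by
          exact pow_eq_zero_iff (by norm_num) |>.mp h1
        have := sub_eq_zero.mp h1'
        have := sub_eq_zero.mp hv
        exact Prod.ext ‹Y.1 = X.1› ‹Y.2 = X.2›
      · exfalso
        apply hneg1
        refine ⟨(Y.1 - X.1) * (Y.2 - X.2)⁻¹, ?_⟩
        field_simp
        linear_combination -h
    · intro h
      simp [h, quadrance]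
  -- counting
  have hcardF : Fintype.card (F × F) = Fintype.card F ^ 2 := by
    rw [Fintype.card_prod]; ring
  have hA : (Finset.univ.filter (fun Y : F × F => quadrance X Y ≠ 0)).card
      = Fintype.card F ^ 2 - 1 := by
    have := Finset.card_filter_add_card_filter_not
      (s := (Finset.univ : Finset (F × F))) (p := fun Y => quadrance X Y = 0)
    rw [hzero] at this
    simp only [Finset.card_singleton, Finset.card_univ, hcardF] at this
    simp only [ne_eq]
    omega
  have hsplit : S.card + N.card
      = (Finset.univ.filter (fun Y : F × F => quadrance X Y ≠ 0)).card := by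
    have h1 : S = (Finset.univ.filter (fun Y : F × F => quadrance X Y ≠ 0)).filter
        (fun Y => IsSquare (quadrance X Y)) := by
      rw [hS, Finset.filter_filter]
      apply Finset.filter_congr
      intro Y _
      tauto
    have h2 : N = (Finset.univ.filter (fun Y : F × F => quadrance X Y ≠ 0)).filter
        (fun Y => ¬ IsSquare (quadrance X Y)) := by
      rw [hN, Finset.filter_filter]
      ext Y
      simp only [Finset.mem_filter, Finset.mem_univ, true_and]
      constructor
      · intro h
        exact ⟨fun h0 => h (h0 ▸ IsSquare.zero), h⟩
      · tauto
    rw [h1, h2]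
    exact Finset.card_filter_add_card_filter_not _
  -- conclude
  have hNatcard : Nat.card {Y : F × F // IsSquare (quadrance X Y) ∧ quadrance X Y ≠ 0}
      = S.card := by
    rw [Nat.card_eq_fintype_card, hS, Fintype.card_subtype]
  rw [hNatcard]
  have hq2 : Odd (Fintype.card F ^ 2) := hodd.pow
  rw [Nat.odd_iff] at hq2
  rw [hA] at hsplit
  omega
end

section
/- Let q be an odd prime power with q ≡ 3 (mod 4). If U ⊆ F_q² induces a complete subgraph of the quadrance graph V_q (i.e., Q(X,Y) is a nonzero square for all distinct X, Y ∈ U), then |U| ≤ q. -/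
open scoped Classical

theorem stmt_19 (F : Type*) [Field F] [Fintype F] (q : ℕ)
    (hcard : Fintype.card F = q) (hodd : Odd q) (h4 : q % 4 = 3)
    (U : Set (F × F))
    (hU : ∀ X ∈ U, ∀ Y ∈ U, X ≠ Y →
      IsSquare (quadrance X Y) ∧ quadrance X Y ≠ 0) :
    U.ncard ≤ q := by
  classical
  -- -1 is not a square
  have hns : ¬ IsSquare (-1 : F) := by
    rw [FiniteField.isSquare_neg_one_iff, hcard, h4]
    simp
  -- find a, b with a^2 + b^2 = -1
  haveI : CharP F (ringChar F) := ringChar.charP F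
  haveI : NeZero (ringChar F) := ⟨CharP.char_ne_zero_of_finite F (ringChar F)⟩
  obtain ⟨a', b', hab'⟩ := CharP.sq_add_sq F (ringChar F) (-1)
  set a : F := (a' : F)
  set b : F := (b' : F)
  have hab : a ^ 2 + b ^ 2 = -1 := by simpa using hab'
  set f : F × F → F := fun P => b * P.1 - a * P.2 with hf
  have hinj : Set.InjOn f U := by
    intro X hX Y hY hfXY
    by_contra hne
    obtain ⟨hsq, hnz⟩ := hU X hX Y hY hne
    have h0 : b * (Y.1 - X.1) = a * (Y.2 - X.2) := by
      have : b * X.1 - a * X.2 = b * Y.1 - a * Y.2 := hfXY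
      linear_combination -this
    -- (Y - X) = t • (a, b)
    obtain ⟨t, hu, hv⟩ : ∃ t : F, Y.1 - X.1 = t * a ∧ Y.2 - X.2 = t * b := by
      by_cases ha : a = 0
      · have hb : b ≠ 0 := by
          intro hb
          rw [ha, hb] at hab
          simp at hab
        refine ⟨(Y.2 - X.2) / b, ?_, by field_simp⟩
        rw [ha, mul_zero]
        have := h0
        rw [ha, zero_mul] at this
        exact mul_left_cancel₀ hb (by simpa using this)
      · refine ⟨(Y.1 - X.1) / a, by field_simp, ?_⟩
        field_simp
        linear_combination -h0
    have ht : t ≠ 0 := by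
      intro ht0
      apply hne
      apply Prod.ext
      · have := hu; rw [ht0, zero_mul] at this; exact (sub_eq_zero.mp this).symm
      · have := hv; rw [ht0, zero_mul] at this; exact (sub_eq_zero.mp this).symm
    have hq : quadrance X Y = -t ^ 2 := by
      unfold quadrance
      rw [hu, hv]
      linear_combination t ^ 2 * hab
    obtain ⟨s, hs⟩ := hsq
    apply hns
    refine ⟨s / t, ?_⟩
    have : -t ^ 2 = s * s := by rw [← hq, hs]
    field_simp
    linear_combination this
  calc U.ncard = (f '' U).ncard := (Set.ncard_image_of_injOn hinj).symm
    _ ≤ (Set.univ : Set F).ncard := Set.ncard_le_ncard (Set.subset_univ _) Set.finite_univ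
    _ = q := by rw [Set.ncard_univ, Nat.card_eq_fintype_card, hcard]
end
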